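/- arXiv:2008.07248 — 4 statements merged into one kernel-verified Lean document; each statement's English description precedes it below -/
import Mathlib

section
/- Let φ be a Borel measure on Ω_C. If φ is the surface area measure of some C-asymptotic convex set K, then there exists a constant M such that Δ(ω)^{d-1} · φ(ω) ≤ M for every nonempty compact subset ω ⊂ Ω_C. -/
open scoped RealInnerProductSpace ENNReal NNReal
open MeasureTheory Metric Set

noncomputable section

variable {d : ℕ}

/-- `C` is a pointed closed convex cone with apex at the origin and nonempty interior. -/
def IsPCCCone (C : Set (EuclideanSpace ℝ (Fin d))) : Prop :=
  IsClosed C ∧ Convex ℝ C ∧ (∀ x ∈ C, ∀ t : ℝ, 0 ≤ t → t • x ∈ C) ∧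
    (∀ x ∈ C, -x ∈ C → x = 0) ∧ (interior C).Nonempty

/-- The polar cone `C°`. -/
def polarCone (C : Set (EuclideanSpace ℝ (Fin d))) : Set (EuclideanSpace ℝ (Fin d)) :=
  {x | ∀ y ∈ C, ⟪x, y⟫ ≤ 0}

/-- `Ω_C = S^{d-1} ∩ int C°`. -/
def omegaC (C : Set (EuclideanSpace ℝ (Fin d))) : Set (EuclideanSpace ℝ (Fin d)) :=
  Metric.sphere 0 1 ∩ interior (polarCone C)

/-- The reverse spherical image `τ(K, ω)`: the set of boundary points of `K` at which some
outer normal vector belongs to `ω`. -/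
def revSphImage (K ω : Set (EuclideanSpace ℝ (Fin d))) : Set (EuclideanSpace ℝ (Fin d)) :=
  {x ∈ frontier K | ∃ u ∈ ω, ∀ y ∈ K, ⟪u, y⟫ ≤ ⟪u, x⟫}

/-- The surface area measure `S_{d-1}(K, ω) = H^{d-1}(τ(K,ω))`. -/
def surfMeas (K ω : Set (EuclideanSpace ℝ (Fin d))) : ℝ≥0∞ :=
  μH[(d : ℝ) - 1] (revSphImage K ω)

/-- `K` is a `C`-asymptotic set. -/
def CAsymptotic (C K : Set (EuclideanSpace ℝ (Fin d))) : Prop :=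
  K.Nonempty ∧ IsClosed K ∧ Convex ℝ K ∧ K ⊆ C ∧
    ∀ ε > 0, ∃ R : ℝ, ∀ x ∈ frontier C, R ≤ ‖x‖ → Metric.infDist x K < ε

/-- `K` is a `C`-close set. -/
def CClose (C K : Set (EuclideanSpace ℝ (Fin d))) : Prop :=
  K.Nonempty ∧ IsClosed K ∧ Convex ℝ K ∧ K ⊆ C ∧ volume (C \ K) < ⊤

/-- `K` is a `C`-full set. -/
def CFull (C K : Set (EuclideanSpace ℝ (Fin d))) : Prop :=
  K.Nonempty ∧ IsClosed K ∧ Convex ℝ K ∧ K ⊆ C ∧ Bornology.IsBounded (C \ K)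

/-- The support function `h(K, u)`. -/
def suppFn (K : Set (EuclideanSpace ℝ (Fin d))) (u : EuclideanSpace ℝ (Fin d)) : ℝ :=
  sSup ((fun y => ⟪u, y⟫) '' K)

/-- `A_ε` within `Ω`. -/
def thick (Ω A : Set (EuclideanSpace ℝ (Fin d))) (ε : ℝ) : Set (EuclideanSpace ℝ (Fin d)) :=
  {y ∈ Ω | ∃ x ∈ A, dist x y < ε}

/-- The Lévy–Prokhorov distance of two measures (set functions) on `Ω`. -/
def lpDist (Ω : Set (EuclideanSpace ℝ (Fin d)))
    (μ ν : Set (EuclideanSpace ℝ (Fin d)) → ℝ≥0∞) : ℝ :=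
  sInf {ε : ℝ | 0 < ε ∧ ∀ A ⊆ Ω, MeasurableSet A →
    μ A ≤ ν (thick Ω A ε) + ENNReal.ofReal ε ∧ ν A ≤ μ (thick Ω A ε) + ENNReal.ofReal ε}

/-- The boundary of `Ω_C` relative to the sphere. -/
def bdOmega (C : Set (EuclideanSpace ℝ (Fin d))) : Set (EuclideanSpace ℝ (Fin d)) :=
  closure (omegaC C) \ omegaC C

/-- `Δ(ω)`: smallest angle between a vector of `ω` and a vector of `bd Ω_C`. -/
def sphDelta (C ω : Set (EuclideanSpace ℝ (Fin d))) : ℝ :=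
  sInf {θ | ∃ u ∈ ω, ∃ v ∈ bdOmega C, θ = InnerProductGeometry.angle u v}

/-- The bounded-Lipschitz norm `‖f‖_BL = ‖f‖_L + ‖f‖_∞` of `f` on `ω`. -/
def normBL (ω : Set (EuclideanSpace ℝ (Fin d))) (f : EuclideanSpace ℝ (Fin d) → ℝ) : ℝ :=
  sSup {t | ∃ u ∈ ω, ∃ v ∈ ω, u ≠ v ∧ t = |f u - f v| / dist u v} +
    sSup {t | ∃ u ∈ ω, t = |f u|}



-- ===================== auxiliary lemmas =====================


-- metric projection onto a closed convex set
theorem proj_exists {K : Set (EuclideanSpace ℝ (Fin n))} (hne : K.Nonempty) (hcl : IsClosed K)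
    (hcv : Convex ℝ K) :
    ∃ P : EuclideanSpace ℝ (Fin n) → EuclideanSpace ℝ (Fin n),
      LipschitzWith 1 P ∧ (∀ z, P z ∈ K) ∧ ∀ z, ∀ y ∈ K, ⟪z - P z, y - P z⟫ ≤ 0 := by
  have hmin : ∀ z : EuclideanSpace ℝ (Fin n), ∃ p ∈ K, ∀ y ∈ K, ⟪z - p, y - p⟫ ≤ 0 := by
    intro z
    obtain ⟨p, hpK, hpd⟩ := hcl.exists_infDist_eq_dist hne z
    refine ⟨p, hpK, ?_⟩
    have h1 : ‖z - p‖ = ⨅ w : K, ‖z - w‖ := by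
      have e : (⨅ w : K, ‖z - w‖) = Metric.infDist z K := by
        rw [Metric.infDist_eq_iInf]; simp_rw [dist_eq_norm]
      rw [e, hpd, dist_eq_norm]
    exact (norm_eq_iInf_iff_real_inner_le_zero hcv hpK).mp h1
  choose P hPK hPvar using hmin
  refine ⟨P, ?_, hPK, hPvar⟩
  refine LipschitzWith.of_dist_le_mul fun z₁ z₂ => ?_
  rcases eq_or_ne (P z₁) (P z₂) with h | h
  · simp [dist_eq_norm, h, dist_nonneg]
  · have h1 : ⟪z₁ - P z₁, P z₂ - P z₁⟫ ≤ 0 := hPvar z₁ _ (hPK z₂)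
    have h2 : ⟪z₂ - P z₂, P z₁ - P z₂⟫ ≤ 0 := hPvar z₂ _ (hPK z₁)
    have key : ‖P z₁ - P z₂‖ ^ 2 ≤ ⟪z₁ - z₂, P z₁ - P z₂⟫ := by
      have e1 : ⟪z₁ - P z₁, P z₁ - P z₂⟫ ≥ 0 := by
        have := h1
        rw [show P z₂ - P z₁ = -(P z₁ - P z₂) by abel, inner_neg_right] at this
        linarith
      have e2 : ⟪z₂ - P z₂, P z₁ - P z₂⟫ ≤ 0 := h2
      have expand : ⟪z₁ - z₂, P z₁ - P z₂⟫
          = ⟪z₁ - P z₁, P z₁ - P z₂⟫ - ⟪z₂ - P z₂, P z₁ - P z₂⟫ + ‖P z₁ - P z₂‖ ^ 2 := by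
        rw [← real_inner_self_eq_norm_sq]
        rw [show z₁ - z₂ = (z₁ - P z₁) - (z₂ - P z₂) + (P z₁ - P z₂) by abel]
        rw [inner_add_left, inner_sub_left]
      rw [expand]; linarith
    have hnorm : ‖P z₁ - P z₂‖ ^ 2 ≤ ‖z₁ - z₂‖ * ‖P z₁ - P z₂‖ :=
      key.trans (real_inner_le_norm _ _)
    have hpos : 0 < ‖P z₁ - P z₂‖ := norm_pos_iff.mpr (sub_ne_zero.mpr h)
    rw [dist_eq_norm, dist_eq_norm]
    push_cast
    nlinarith [hpos, hnorm]


theorem polarCone_isClosed (C : Set (EuclideanSpace ℝ (Fin d))) : IsClosed (polarCone C) := by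
  have : polarCone C = ⋂ y ∈ C, {x : EuclideanSpace ℝ (Fin d) | ⟪x, y⟫ ≤ 0} := by
    ext x; simp [polarCone]
  rw [this]
  exact isClosed_biInter fun y _ =>
    isClosed_le (Continuous.inner continuous_id continuous_const) continuous_const

theorem sphDelta_nonneg (C ω : Set (EuclideanSpace ℝ (Fin d))) : 0 ≤ sphDelta C ω := by
  rcases eq_empty_or_nonempty {θ | ∃ u ∈ ω, ∃ v ∈ bdOmega C, θ = InnerProductGeometry.angle u v}
    with h | h
  · simp [sphDelta, h, Real.sInf_empty]
  · exact le_csInf h (by rintro θ ⟨u, _, v, _, rfl⟩; exact InnerProductGeometry.angle_nonneg u v)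

set_option maxHeartbeats 1000000 in
/-- Key angle lemma: inner products with directions in `ω` are strongly negative on `C`. -/
theorem inner_le_of_sphDelta {C ω : Set (EuclideanSpace ℝ (Fin d))}
    (hω : ω ⊆ omegaC C) (hδ : 0 < sphDelta C ω) {u y : EuclideanSpace ℝ (Fin d)}
    (hu : u ∈ ω) (hy : y ∈ C) :
    ⟪u, y⟫ ≤ -(Real.sin (min (sphDelta C ω) (Real.pi/2) / 2) * ‖y‖) := by
  set δ := sphDelta C ω with hδdef
  set δ' := min δ (Real.pi/2) / 2 with hδ'def
  have hpi := Real.pi_pos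
  have hδ'pos : 0 < δ' := by
    rw [hδ'def]
    have : 0 < min δ (Real.pi/2) := lt_min hδ (by linarith)
    linarith
  have hδ'lt2 : δ' < Real.pi/2 := by
    rw [hδ'def]
    have : min δ (Real.pi/2) ≤ Real.pi/2 := min_le_right _ _
    linarith
  set s := Real.sin δ' with hsdef
  have hs_pos : 0 < s := Real.sin_pos_of_pos_of_lt_pi hδ'pos (by linarith)
  have hs_le : s ≤ 1 := Real.sin_le_one δ'
  rcases eq_or_ne y 0 with rfl | hy0
  · simp
  by_contra hcon
  push_neg at hcon
  have hynorm : 0 < ‖y‖ := norm_pos_iff.mpr hy0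
  have huΩ : u ∈ omegaC C := hω hu
  have hu_sph : ‖u‖ = 1 := by
    have := huΩ.1
    rwa [mem_sphere_zero_iff_norm] at this
  have hu_int : u ∈ interior (polarCone C) := huΩ.2
  have hu_pol : u ∈ polarCone C := interior_subset hu_int
  set yh : EuclideanSpace ℝ (Fin d) := ‖y‖⁻¹ • y with hyhdef
  have hyh_norm : ‖yh‖ = 1 := by
    rw [hyhdef, norm_smul, norm_inv, norm_norm, inv_mul_cancel₀ hynorm.ne']
  set c : ℝ := ⟪u, yh⟫ with hcdef
  have hc_eq : ⟪u, y⟫ = c * ‖y‖ := by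
    rw [hcdef, hyhdef, real_inner_smul_right u y ‖y‖⁻¹]
    field_simp
  have hc_nonpos : c ≤ 0 := by
    have := hu_pol y hy
    rw [hc_eq] at this
    nlinarith
  have hc_gt : -s < c := by
    rw [hc_eq] at hcon
    nlinarith
  have hc_sq : c ^ 2 < s ^ 2 := by nlinarith
  have hc_sq1 : c ^ 2 < 1 := by nlinarith
  set w : EuclideanSpace ℝ (Fin d) := yh - c • u with hwdef
  have hw_sq : ‖w‖ ^ 2 = 1 - c ^ 2 := by
    have h1 : ‖w‖ ^ 2 = ‖yh‖ ^ 2 - 2 * ⟪yh, c • u⟫ + ‖c • u‖ ^ 2 := by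
      rw [hwdef]; exact norm_sub_sq_real yh (c • u)
    have h2 : ⟪yh, c • u⟫ = c * c := by
      rw [real_inner_smul_right yh u c, real_inner_comm u yh, ← hcdef]
    have h3 : ‖c • u‖ ^ 2 = c ^ 2 := by
      rw [norm_smul, hu_sph, mul_one, Real.norm_eq_abs, sq_abs]
    rw [h1, h2, h3, hyh_norm]; ring
  have hw_pos : 0 < ‖w‖ := by
    have h0 : 0 < ‖w‖ ^ 2 := by rw [hw_sq]; nlinarith
    nlinarith [norm_nonneg w, h0]
  set b : ℝ := ‖w‖ with hbdef
  have hb_sq : b ^ 2 = 1 - c ^ 2 := hw_sq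
  have hb_pos : 0 < b := hw_pos
  set e : EuclideanSpace ℝ (Fin d) := b⁻¹ • w with hedef
  have he_norm : ‖e‖ = 1 := by
    rw [hedef, norm_smul, norm_inv, Real.norm_eq_abs, abs_of_pos hb_pos, ← hbdef,
      inv_mul_cancel₀ hb_pos.ne']
  have huw : ⟪u, w⟫ = 0 := by
    rw [hwdef, inner_sub_right u yh (c • u), real_inner_smul_right u u c,
      real_inner_self_eq_norm_sq u, hu_sph, ← hcdef]
    ring
  have hue : ⟪u, e⟫ = 0 := by
    rw [hedef, real_inner_smul_right u w b⁻¹, huw, mul_zero]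
  have hwy : ⟪w, yh⟫ = 1 - c ^ 2 := by
    rw [hwdef, inner_sub_left yh (c • u) yh, real_inner_smul_left u yh c,
      real_inner_self_eq_norm_sq yh, hyh_norm, ← hcdef]
    ring
  have hey : ⟪e, yh⟫ = b := by
    rw [hedef, real_inner_smul_left w yh b⁻¹, hwy, ← hb_sq]
    field_simp
  set γ : ℝ → EuclideanSpace ℝ (Fin d) := fun t => Real.cos t • u + Real.sin t • e with hγdef
  have hγapp : ∀ t, γ t = Real.cos t • u + Real.sin t • e := fun t => rfl
  have hγcont : Continuous γ := by
    rw [hγdef]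
    exact (Real.continuous_cos.smul continuous_const).add
      (Real.continuous_sin.smul continuous_const)
  have hγnorm : ∀ t, ‖γ t‖ = 1 := by
    intro t
    have e1 : ‖γ t‖ ^ 2 = ‖Real.cos t • u‖ ^ 2 + 2 * ⟪Real.cos t • u, Real.sin t • e⟫ +
        ‖Real.sin t • e‖ ^ 2 := by
      rw [hγapp t]; exact norm_add_sq_real _ _
    have e2 : ⟪Real.cos t • u, Real.sin t • e⟫ = Real.cos t * (Real.sin t * ⟪u, e⟫) := by
      rw [real_inner_smul_left u (Real.sin t • e) (Real.cos t),
        real_inner_smul_right u e (Real.sin t)]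
    have e3 : ‖Real.cos t • u‖ = |Real.cos t| := by
      rw [norm_smul, hu_sph, mul_one, Real.norm_eq_abs]
    have e4 : ‖Real.sin t • e‖ = |Real.sin t| := by
      rw [norm_smul, he_norm, mul_one, Real.norm_eq_abs]
    have e5 : ‖γ t‖ ^ 2 = 1 := by
      rw [e1, e2, e3, e4, hue, sq_abs, sq_abs]
      ring_nf
      linarith [Real.sin_sq_add_cos_sq t]
    have e6 : 0 ≤ ‖γ t‖ := norm_nonneg (γ t)
    nlinarith [e5, e6]
  have hγinner : ∀ t, ⟪u, γ t⟫ = Real.cos t := by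
    intro t
    rw [hγapp t, inner_add_right u (Real.cos t • u) (Real.sin t • e),
      real_inner_smul_right u u (Real.cos t), real_inner_smul_right u e (Real.sin t),
      real_inner_self_eq_norm_sq u, hu_sph, hue]
    ring
  have hiy : ⟪γ δ', yh⟫ = c * Real.cos δ' + b * Real.sin δ' := by
    rw [hγapp δ', inner_add_left (Real.cos δ' • u) (Real.sin δ' • e) yh,
      real_inner_smul_left u yh (Real.cos δ'), real_inner_smul_left e yh (Real.sin δ'),
      ← hcdef, hey]
    ring
  have hiy2 : ⟪γ δ', y⟫ = ‖y‖ * (c * Real.cos δ' + b * Real.sin δ') := by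
    rw [← hiy]
    have h6 : ⟪γ δ', yh⟫ = ‖y‖⁻¹ * ⟪γ δ', y⟫ := by
      rw [hyhdef, real_inner_smul_right (γ δ') y ‖y‖⁻¹]
    rw [h6]
    field_simp
  have hcos_pos : 0 < Real.cos δ' := Real.cos_pos_of_mem_Ioo ⟨by linarith, hδ'lt2⟩
  have hval_pos : 0 < c * Real.cos δ' + b * Real.sin δ' := by
    have h1 : (c * Real.cos δ') ^ 2 < (b * Real.sin δ') ^ 2 := by
      have hcs := Real.sin_sq_add_cos_sq δ'
      nlinarith
    have h2 : 0 ≤ b * Real.sin δ' := mul_nonneg hb_pos.le hs_pos.le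
    nlinarith
  have hend : γ δ' ∉ polarCone C := by
    intro hmem
    have hyineq := hmem y hy
    rw [hiy2] at hyineq
    nlinarith
  set S : Set ℝ := {t ∈ Icc 0 δ' | γ t ∉ interior (polarCone C)} with hSdef
  have hS_closed : IsClosed S := by
    have : S = Icc 0 δ' ∩ γ ⁻¹' (interior (polarCone C))ᶜ := rfl
    rw [this]
    exact isClosed_Icc.inter (isOpen_interior.isClosed_compl.preimage hγcont)
  have hS_ne : S.Nonempty := ⟨δ', ⟨⟨hδ'pos.le, le_refl _⟩, fun h => hend (interior_subset h)⟩⟩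
  have hS_bdd : BddBelow S := ⟨0, fun t ht => ht.1.1⟩
  set t₀ : ℝ := sInf S with ht₀def
  have ht₀S : t₀ ∈ S := hS_closed.csInf_mem hS_ne hS_bdd
  have ht₀pos : 0 < t₀ := by
    rcases lt_or_eq_of_le ht₀S.1.1 with h | h
    · exact h
    · exfalso
      apply ht₀S.2
      have h0 : γ 0 = u := by rw [hγapp 0]; simp
      rw [← h, h0]
      exact hu_int
  have ht₀le : t₀ ≤ δ' := ht₀S.1.2
  set v : EuclideanSpace ℝ (Fin d) := γ t₀ with hvdef
  have hv_not : v ∉ omegaC C := fun h => ht₀S.2 h.2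
  have hv_cl : v ∈ closure (omegaC C) := by
    have htend : Filter.Tendsto γ (nhdsWithin t₀ (Iio t₀)) (nhds v) :=
      (hγcont.continuousAt.tendsto).mono_left nhdsWithin_le_nhds
    have hne : (nhdsWithin t₀ (Iio t₀)).NeBot := nhdsLT_neBot t₀
    refine mem_closure_of_tendsto htend ?_
    filter_upwards [Ioo_mem_nhdsLT ht₀pos] with t ht
    constructor
    · rw [mem_sphere_zero_iff_norm]; exact hγnorm t
    · by_contra hnotin
      have htS : t ∈ S := ⟨⟨ht.1.le, ht.2.le.trans ht₀le⟩, hnotin⟩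
      have : t₀ ≤ t := csInf_le hS_bdd htS
      linarith [ht.2]
  have hv_bd : v ∈ bdOmega C := ⟨hv_cl, hv_not⟩
  have hvnorm : ‖v‖ = 1 := hγnorm t₀
  have hinner_uv : ⟪u, v⟫ = Real.cos t₀ := hγinner t₀
  have hangle : InnerProductGeometry.angle u v = t₀ := by
    rw [InnerProductGeometry.angle, hinner_uv, hu_sph, hvnorm, mul_one, div_one]
    exact Real.arccos_cos ht₀pos.le (by linarith)
  have hbdd : BddBelow {θ | ∃ u ∈ ω, ∃ v ∈ bdOmega C, θ = InnerProductGeometry.angle u v} := by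
    refine ⟨0, ?_⟩
    rintro θ ⟨u', _, v', _, rfl⟩
    exact InnerProductGeometry.angle_nonneg u' v'
  have hδle : δ ≤ t₀ := by
    have hmem : InnerProductGeometry.angle u v ∈
        {θ | ∃ u ∈ ω, ∃ v ∈ bdOmega C, θ = InnerProductGeometry.angle u v} :=
      ⟨u, hu, v, hv_bd, rfl⟩
    have h7 := csInf_le hbdd hmem
    rw [hangle] at h7
    exact h7
  have hδ'lt : δ' ≤ δ / 2 := by
    rw [hδ'def]
    have := min_le_left δ (Real.pi/2)
    linarith
  linarith



/-- Hausdorff measure bound for a cube face in Euclidean space. -/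
theorem face_bound {m : ℕ} (i : Fin (m + 1)) (σ ρ : ℝ) (hρ : 0 < ρ) :
    μH[(m : ℝ)] {z : EuclideanSpace ℝ (Fin (m + 1)) | z i = σ ∧ ∀ j, |z j| ≤ ρ}
      ≤ ((((m + 1 : ℕ) : ℝ≥0) ^ ((1:ℝ)/2) : ℝ≥0) : ℝ≥0∞) ^ (m : ℝ) * ENNReal.ofReal ((2 * ρ) ^ m) := by
  classical
  -- the insertion map from ℝ^m (sup norm) into pi space, then into Euclidean space
  set g : (Fin m → ℝ) → EuclideanSpace ℝ (Fin (m + 1)) :=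
    fun y => (WithLp.equiv 2 (Fin (m+1) → ℝ)).symm (Fin.insertNth (α := fun _ => ℝ) i σ y) with hg
  -- g is Lipschitz with constant √(m+1)
  have hsymm : LipschitzWith ((((m + 1 : ℕ)) : ℝ≥0) ^ ((1:ℝ)/2))
      ((WithLp.equiv 2 (Fin (m+1) → ℝ)).symm) := by
    have h2 := (PiLp.antilipschitzWith_ofLp 2 (fun _ : Fin (m+1) => ℝ)).to_rightInverse
      (WithLp.equiv 2 (Fin (m+1) → ℝ)).right_inv
    have hc : ((Fintype.card (Fin (m+1)) : ℝ≥0) ^ ((1:ℝ≥0∞) / 2).toReal)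
        = ((((m + 1 : ℕ)) : ℝ≥0) ^ ((1:ℝ)/2)) := by
      rw [Fintype.card_fin]
      norm_num
    rw [← hc]
    exact h2
  have hins : LipschitzWith 1 (fun y : Fin m → ℝ => Fin.insertNth (α := fun _ => ℝ) i σ y) := by
    refine LipschitzWith.of_dist_le_mul fun a b => ?_
    rw [NNReal.coe_one, one_mul, dist_pi_le_iff dist_nonneg]
    intro j
    rcases eq_or_ne j i with rfl | hj
    · simp only [Fin.insertNth_apply_same]
      rw [dist_self]
      exact dist_nonneg
    · obtain ⟨k, rfl⟩ := Fin.exists_succAbove_eq hj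
      rw [Fin.insertNth_apply_succAbove, Fin.insertNth_apply_succAbove]
      exact dist_le_pi_dist a b k
  have hgl : LipschitzWith ((((m + 1 : ℕ)) : ℝ≥0) ^ ((1:ℝ)/2)) g := by
    have := hsymm.comp hins
    rw [mul_one] at this
    exact this
  -- the face is contained in the image of the sup-ball
  have hsub : {z : EuclideanSpace ℝ (Fin (m + 1)) | z i = σ ∧ ∀ j, |z j| ≤ ρ}
      ⊆ g '' (Metric.closedBall 0 ρ) := by
    rintro z ⟨hzi, hzj⟩
    refine ⟨Fin.removeNth i z, ?_, ?_⟩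
    · rw [Metric.mem_closedBall, dist_pi_le_iff hρ.le]
      intro k
      simpa [Real.dist_eq, Fin.removeNth_apply] using hzj (i.succAbove k)
    · rw [hg]
      simp only
      rw [← hzi]
      rw [Fin.insertNth_self_removeNth]
      rfl
  calc μH[(m : ℝ)] {z : EuclideanSpace ℝ (Fin (m + 1)) | z i = σ ∧ ∀ j, |z j| ≤ ρ}
      ≤ μH[(m : ℝ)] (g '' (Metric.closedBall 0 ρ)) := measure_mono hsub
    _ ≤ ((((m + 1 : ℕ) : ℝ≥0) ^ ((1:ℝ)/2) : ℝ≥0) : ℝ≥0∞) ^ (m : ℝ) *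
        μH[(m : ℝ)] (Metric.closedBall (0 : Fin m → ℝ) ρ) :=
        hgl.hausdorffMeasure_image_le (by positivity) _
    _ ≤ _ := by
        gcongr
        have hcard : μH[(m : ℝ)] = (volume : Measure (Fin m → ℝ)) := by
          have := MeasureTheory.hausdorffMeasure_pi_real (ι := Fin m)
          rwa [Fintype.card_fin] at this
        rw [hcard]
        have hsub2 : Metric.closedBall (0 : Fin m → ℝ) ρ ⊆ Set.pi Set.univ fun _ => Icc (-ρ) ρ := by
          intro x hx
          rw [Metric.mem_closedBall, dist_pi_le_iff hρ.le] at hx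
          intro j _
          have h := hx j
          rw [Real.dist_eq] at h
          simp only [Pi.zero_apply, sub_zero] at h
          exact abs_le.mp h
        refine (measure_mono hsub2).trans ?_
        rw [volume_pi_pi]
        simp only [Real.volume_Icc]
        rw [Finset.prod_const]
        rw [← ENNReal.ofReal_pow (by linarith)]
        simp only [Finset.card_univ, Fintype.card_fin]
        apply le_of_eq
        congr 1
        ring


theorem gnorm_le_norm {n : ℕ} (z : EuclideanSpace ℝ (Fin n)) :
    ‖WithLp.equiv 2 (Fin n → ℝ) z‖ ≤ ‖z‖ := by
  have h := (PiLp.lipschitzWith_ofLp 2 (fun _ : Fin n => ℝ)).dist_le_mul z 0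
  simpa [WithLp.ofLp_zero, dist_zero_right] using h

theorem norm_le_sqrt_gnorm {m : ℕ} (z : EuclideanSpace ℝ (Fin (m+1))) :
    ‖z‖ ≤ Real.sqrt (m+1) * ‖WithLp.equiv 2 (Fin (m+1) → ℝ) z‖ := by
  have h := (PiLp.antilipschitzWith_ofLp 2 (fun _ : Fin (m+1) => ℝ)).le_mul_dist z 0
  rw [WithLp.ofLp_zero, dist_zero_right, dist_zero_right] at h
  refine h.trans (le_of_eq ?_)
  congr 1
  rw [NNReal.coe_rpow, Real.sqrt_eq_rpow]
  norm_num [Fintype.card_fin]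


set_option maxHeartbeats 2000000 in
/-- **Theorem 4.1 (necessary condition).** If a Borel measure `φ` on `Ω_C` is the surface area
measure of some `C`-asymptotic convex set `K`, then `ω ↦ Δ(ω)^{d-1} φ(ω)` is bounded over
nonempty compact subsets `ω ⊆ Ω_C`. -/
theorem necessary_condition_surface_area_measure (d : ℕ) (hd : 2 ≤ d)
    (C : Set (EuclideanSpace ℝ (Fin d))) (hC : IsPCCCone C)
    (φ : Measure (EuclideanSpace ℝ (Fin d))) (hφ : φ (omegaC C)ᶜ = 0)
    (K : Set (EuclideanSpace ℝ (Fin d))) (hK : CAsymptotic C K)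
    (hSK : ∀ ω ⊆ omegaC C, MeasurableSet ω → surfMeas K ω = φ ω) :
    ∃ M : ℝ, ∀ ω ⊆ omegaC C, ω.Nonempty → IsCompact ω →
      ENNReal.ofReal (sphDelta C ω ^ (d - 1)) * φ ω ≤ ENNReal.ofReal M := by
  obtain ⟨m, rfl⟩ : ∃ m, d = m + 1 := ⟨d - 1, by omega⟩
  have hm : 1 ≤ m := by omega
  obtain ⟨⟨y₀, hy₀⟩, hKcl, hKcv, hKC, -⟩ := hK
  obtain ⟨P, hPlip, hPmem, hPvar⟩ := proj_exists ⟨y₀, hy₀⟩ hKcl hKcv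
  have hpi := Real.pi_pos
  set κ : ℝ≥0 := ((m + 1 : ℕ) : ℝ≥0) ^ ((1:ℝ)/2) with hκ
  set c₂ : ℝ := 4 * Real.pi * ‖y₀‖ + 2 * Real.pi with hc₂
  have hc₂pos : 0 < c₂ := by
    have := norm_nonneg y₀
    rw [hc₂]; nlinarith
  set E : ℝ≥0∞ := ((m + 1 : ℕ) : ℝ≥0∞) * 2 * (κ : ℝ≥0∞) ^ m * ENNReal.ofReal (c₂ ^ m)
    with hE
  have hEtop : E ≠ ⊤ := by
    rw [hE]
    refine ENNReal.mul_ne_top (ENNReal.mul_ne_top (ENNReal.mul_ne_top ?_ ?_) ?_) ?_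
    · exact ENNReal.natCast_ne_top _
    · exact ENNReal.ofNat_ne_top
    · exact ENNReal.pow_ne_top ENNReal.coe_ne_top
    · exact ENNReal.ofReal_ne_top
  refine ⟨E.toReal, ?_⟩
  intro ω hsub hne hcomp
  rw [← hSK ω hsub hcomp.isClosed.measurableSet]
  simp only [Nat.add_sub_cancel]
  set δ := sphDelta C ω with hδdef
  have hδ0 : 0 ≤ δ := sphDelta_nonneg C ω
  rcases eq_or_lt_of_le hδ0 with heq | hpos
  · rw [← heq, zero_pow (by omega : m ≠ 0)]
    simp
  -- the angle set is nonempty and δ ≤ π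
  have hbddS : BddBelow {θ | ∃ u ∈ ω, ∃ v ∈ bdOmega C, θ = InnerProductGeometry.angle u v} := by
    refine ⟨0, ?_⟩
    rintro θ ⟨u', _, v', _, rfl⟩
    exact InnerProductGeometry.angle_nonneg u' v'
  have hSne : {θ | ∃ u ∈ ω, ∃ v ∈ bdOmega C, θ = InnerProductGeometry.angle u v}.Nonempty := by
    by_contra hcon
    rw [not_nonempty_iff_eq_empty] at hcon
    have : δ = 0 := by rw [hδdef, sphDelta, hcon, Real.sInf_empty]
    linarith
  have hδπ : δ ≤ Real.pi := by
    obtain ⟨θ₀, hθ₀⟩ := hSne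
    have h := csInf_le hbddS hθ₀
    obtain ⟨u', -, v', -, rfl⟩ := hθ₀
    exact h.trans (InnerProductGeometry.angle_le_pi _ _)
  set δ'' := min δ (Real.pi/2) / 2 with hδ''def
  have hδ''0 : 0 ≤ δ'' := by
    rw [hδ''def]
    have : 0 ≤ min δ (Real.pi/2) := le_min hδ0 (by linarith)
    linarith
  have hδ''le : δ'' ≤ Real.pi/2 := by
    rw [hδ''def]
    have := min_le_right δ (Real.pi/2)
    linarith
  set s := Real.sin δ'' with hsdef
  have hs_pos : 0 < s := by
    rw [hsdef]
    apply Real.sin_pos_of_pos_of_lt_pi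
    · rw [hδ''def]
      have : 0 < min δ (Real.pi/2) := lt_min hpos (by linarith)
      linarith
    · linarith
  have hs_ge : δ / (2 * Real.pi) ≤ s := by
    have h4c := Real.mul_le_sin hδ''0 hδ''le
    have h4d : δ / 4 ≤ δ'' := by
      rw [hδ''def]
      have : δ / 2 ≤ min δ (Real.pi/2) := le_min (by linarith) (by linarith)
      linarith
    have h4e : 2 / Real.pi * (δ/4) ≤ 2 / Real.pi * δ'' := by
      apply mul_le_mul_of_nonneg_left h4d
      positivity
    calc δ / (2 * Real.pi) = 2 / Real.pi * (δ/4) := by field_simp; ring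
      _ ≤ 2 / Real.pi * δ'' := h4e
      _ ≤ s := h4c
  have hδs : δ ≤ 2 * Real.pi * s := by
    rw [div_le_iff₀ (by linarith : (0:ℝ) < 2 * Real.pi)] at hs_ge
    linarith
  set ρ : ℝ := ‖y₀‖ / s + 1 with hρdef
  have hρpos : 0 < ρ := by
    have : 0 ≤ ‖y₀‖ / s := by positivity
    rw [hρdef]; linarith
  -- norm bound on the reverse spherical image
  have hbound : ∀ x ∈ revSphImage K ω, ‖x‖ ≤ ‖y₀‖ / s := by
    rintro x ⟨hxfr, u, huω, hnorm⟩
    have hxK : x ∈ K := hKcl.frontier_subset hxfr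
    have hxC : x ∈ C := hKC hxK
    have h1 : ⟪u, x⟫ ≤ -(s * ‖x‖) := inner_le_of_sphDelta hsub hpos huω hxC
    have h2 : ⟪u, y₀⟫ ≤ ⟪u, x⟫ := hnorm y₀ hy₀
    have hu1 : ‖u‖ = 1 := mem_sphere_zero_iff_norm.mp (hsub huω).1
    have h3 : -‖y₀‖ ≤ ⟪u, y₀⟫ := by
      have habs := abs_real_inner_le_norm u y₀
      rw [hu1, one_mul] at habs
      have := neg_abs_le (⟪u, y₀⟫)
      rw [abs_le] at habs
      linarith [habs.1]
    rw [le_div_iff₀ hs_pos]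
    nlinarith
  -- the cube boundary
  set D : Set (EuclideanSpace ℝ (Fin (m+1))) :=
    {z | ‖WithLp.equiv 2 (Fin (m+1) → ℝ) z‖ = ρ} with hDdef
  -- the reverse spherical image is contained in the projection of the cube boundary
  have himg : revSphImage K ω ⊆ P '' D := by
    intro x hx
    obtain ⟨hxfr, u, huω, hnorm⟩ := hx
    have hxK : x ∈ K := hKcl.frontier_subset hxfr
    have hu1 : ‖u‖ = 1 := mem_sphere_zero_iff_norm.mp (hsub huω).1
    have hgx : ‖WithLp.equiv 2 (Fin (m+1) → ℝ) x‖ ≤ ‖y₀‖ / s :=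
      (gnorm_le_norm x).trans (hbound x ⟨hxfr, u, huω, hnorm⟩)
    set g : ℝ → ℝ := fun t => ‖WithLp.equiv 2 (Fin (m+1) → ℝ) (x + t • u)‖ with hgdef
    have hgcont : Continuous g := by
      rw [hgdef]
      refine continuous_norm.comp ?_
      exact (PiLp.lipschitzWith_ofLp 2 (fun _ : Fin (m+1) => ℝ)).continuous.comp
        (continuous_const.add (continuous_id.smul continuous_const))
    set T : ℝ := Real.sqrt (m+1) * ρ + ‖x‖ with hTdef
    have hsq_pos : 0 < Real.sqrt (m+1) := Real.sqrt_pos.mpr (by positivity)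
    have hT0 : (0:ℝ) ≤ T := by
      rw [hTdef]
      have := norm_nonneg x
      nlinarith
    have hgT : ρ ≤ g T := by
      have h5 : T - ‖x‖ ≤ ‖x + T • u‖ := by
        have h6 : ‖T • u‖ ≤ ‖x + T • u‖ + ‖x‖ := by
          have h7 : x + T • u - x = T • u := by abel
          have h7' := norm_sub_le (x + T • u) x
          rwa [h7] at h7'
        rw [norm_smul, hu1, mul_one, Real.norm_eq_abs, abs_of_nonneg hT0] at h6
        linarith
      have h8 : ‖x + T • u‖ ≤ Real.sqrt (m+1) * g T := norm_le_sqrt_gnorm _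
      have h9 : T - ‖x‖ = Real.sqrt (m+1) * ρ := by rw [hTdef]; ring
      rw [h9] at h5
      have := h5.trans h8
      exact le_of_mul_le_mul_left this hsq_pos
    have hg0 : g 0 ≤ ρ := by
      have h10 : x + (0:ℝ) • u = x := by simp
      have : g 0 = ‖WithLp.equiv 2 (Fin (m+1) → ℝ) x‖ := by rw [hgdef]; simp only; rw [h10]
      rw [this, hρdef]
      linarith
    obtain ⟨t, htmem, htg⟩ : ∃ t ∈ Icc (0:ℝ) T, g t = ρ := by
      have hsubs := intermediate_value_Icc hT0 hgcont.continuousOn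
      have hmem : ρ ∈ Icc (g 0) (g T) := ⟨hg0, hgT⟩
      obtain ⟨t, ht1, ht2⟩ := hsubs hmem
      exact ⟨t, ht1, ht2⟩
    refine ⟨x + t • u, htg, ?_⟩
    -- P (x + t • u) = x
    have hvar := hPvar (x + t • u) x hxK
    have hinner : 0 ≤ ⟪u, x - P (x + t • u)⟫ := by
      have := hnorm (P (x + t • u)) (hPmem _)
      rw [inner_sub_right]
      linarith
    have hexp : (x + t • u) - P (x + t • u) = (x - P (x + t • u)) + t • u := by abel
    rw [hexp, inner_add_left, real_inner_smul_left, real_inner_self_eq_norm_sq] at hvar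
    have ht0 : 0 ≤ t := htmem.1
    have hzero : x - P (x + t • u) = 0 := by
      have h11 : ‖x - P (x + t • u)‖ ^ 2 = 0 :=
        le_antisymm (by linarith [mul_nonneg ht0 hinner]) (sq_nonneg _)
      have h12 : ‖x - P (x + t • u)‖ = 0 :=
        (pow_eq_zero_iff two_ne_zero).mp h11
      exact norm_eq_zero.mp h12
    exact (sub_eq_zero.mp hzero).symm
  -- measure estimates
  have hexp2 : ((m + 1 : ℕ) : ℝ) - 1 = (m : ℝ) := by push_cast; ring
  set Fb : ℝ≥0∞ := ((κ : ℝ≥0) : ℝ≥0∞) ^ ((m : ℝ)) * ENNReal.ofReal ((2 * ρ) ^ m) with hFb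
  have hface : ∀ (i : Fin (m+1)) (σ : ℝ),
      μH[(m : ℝ)] {z : EuclideanSpace ℝ (Fin (m + 1)) | z i = σ ∧ ∀ j, |z j| ≤ ρ} ≤ Fb :=
    fun i σ => face_bound i σ ρ hρpos
  have hcover : D ⊆ ⋃ i : Fin (m+1),
      ({z : EuclideanSpace ℝ (Fin (m + 1)) | z i = ρ ∧ ∀ j, |z j| ≤ ρ} ∪
       {z : EuclideanSpace ℝ (Fin (m + 1)) | z i = -ρ ∧ ∀ j, |z j| ≤ ρ}) := by
    intro z hz
    have hz' : ‖WithLp.equiv 2 (Fin (m+1) → ℝ) z‖ = ρ := hz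
    have hall : ∀ j, |z j| ≤ ρ := by
      intro j
      have := norm_le_pi_norm (WithLp.equiv 2 (Fin (m+1) → ℝ) z) j
      rw [hz'] at this
      simpa [WithLp.equiv_apply, Real.norm_eq_abs] using this
    have hex : ∃ i, |z i| = ρ := by
      by_contra hcon
      push_neg at hcon
      have : ∀ i, |z i| < ρ := fun i => lt_of_le_of_ne (hall i) (hcon i)
      have hlt : ‖WithLp.equiv 2 (Fin (m+1) → ℝ) z‖ < ρ := by
        rw [pi_norm_lt_iff hρpos]
        intro i
        simpa [WithLp.equiv_apply, Real.norm_eq_abs] using this i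
      rw [hz'] at hlt
      exact lt_irrefl _ hlt
    obtain ⟨i, hi⟩ := hex
    rcases (abs_eq hρpos.le).mp hi with h | h
    · exact mem_iUnion.mpr ⟨i, Or.inl ⟨h, hall⟩⟩
    · exact mem_iUnion.mpr ⟨i, Or.inr ⟨h, hall⟩⟩
  have hmeasD : μH[(m : ℝ)] D ≤ ((m + 1 : ℕ) : ℝ≥0∞) * (2 * Fb) := by
    refine (measure_mono hcover).trans ?_
    refine (measure_iUnion_le _).trans ?_
    rw [tsum_fintype]
    have hone : ∀ i : Fin (m+1),
        μH[(m : ℝ)] ({z : EuclideanSpace ℝ (Fin (m + 1)) | z i = ρ ∧ ∀ j, |z j| ≤ ρ} ∪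
          {z : EuclideanSpace ℝ (Fin (m + 1)) | z i = -ρ ∧ ∀ j, |z j| ≤ ρ}) ≤ 2 * Fb := by
      intro i
      refine (measure_union_le _ _).trans ?_
      calc μH[(m : ℝ)] {z : EuclideanSpace ℝ (Fin (m + 1)) | z i = ρ ∧ ∀ j, |z j| ≤ ρ} +
            μH[(m : ℝ)] {z : EuclideanSpace ℝ (Fin (m + 1)) | z i = -ρ ∧ ∀ j, |z j| ≤ ρ}
          ≤ Fb + Fb := add_le_add (hface i ρ) (hface i (-ρ))
        _ = 2 * Fb := (two_mul Fb).symm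
    calc (∑ i : Fin (m+1), μH[(m : ℝ)]
          ({z : EuclideanSpace ℝ (Fin (m + 1)) | z i = ρ ∧ ∀ j, |z j| ≤ ρ} ∪
           {z : EuclideanSpace ℝ (Fin (m + 1)) | z i = -ρ ∧ ∀ j, |z j| ≤ ρ}))
        ≤ ∑ _i : Fin (m+1), 2 * Fb := Finset.sum_le_sum fun i _ => hone i
      _ = ((m + 1 : ℕ) : ℝ≥0∞) * (2 * Fb) := by
          rw [Finset.sum_const, Finset.card_univ, Fintype.card_fin, nsmul_eq_mul]
  have hmeas : surfMeas K ω ≤ ((m + 1 : ℕ) : ℝ≥0∞) * (2 * Fb) := by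
    have hs1 : surfMeas K ω ≤ μH[(m : ℝ)] (P '' D) := by
      rw [surfMeas, hexp2]
      exact measure_mono himg
    have hs2 : μH[(m : ℝ)] (P '' D) ≤ μH[(m : ℝ)] D := by
      have := hPlip.hausdorffMeasure_image_le (show (0:ℝ) ≤ (m:ℝ) by positivity) D
      simpa using this
    exact (hs1.trans hs2).trans hmeasD
  -- final arithmetic
  have hδρ : δ * (2 * ρ) ≤ c₂ := by
    have hq : (‖y₀‖ / s) * s = ‖y₀‖ := div_mul_cancel₀ _ hs_pos.ne'
    have hqnn : 0 ≤ ‖y₀‖ / s := by positivity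
    rw [hρdef, hc₂]
    nlinarith [norm_nonneg y₀]
  calc ENNReal.ofReal (δ ^ m) * surfMeas K ω
      ≤ ENNReal.ofReal (δ ^ m) * (((m + 1 : ℕ) : ℝ≥0∞) * (2 * Fb)) :=
        mul_le_mul_right hmeas _
    _ = ((m + 1 : ℕ) : ℝ≥0∞) * 2 * ((κ : ℝ≥0∞) ^ ((m : ℝ))) *
        (ENNReal.ofReal (δ ^ m) * ENNReal.ofReal ((2 * ρ) ^ m)) := by
        rw [hFb]; ring
    _ ≤ ((m + 1 : ℕ) : ℝ≥0∞) * 2 * ((κ : ℝ≥0∞) ^ ((m : ℝ))) * ENNReal.ofReal (c₂ ^ m) := by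
        refine mul_le_mul_right ?_ _
        rw [← ENNReal.ofReal_mul (by positivity), ← mul_pow]
        exact ENNReal.ofReal_le_ofReal (pow_le_pow_left₀ (by positivity) hδρ m)
    _ = E := by
        rw [hE, ← ENNReal.rpow_natCast ((κ : ℝ≥0∞)) m]
    _ = ENNReal.ofReal E.toReal := (ENNReal.ofReal_toReal hEtop).symm
end
end

section
/- Let K be a C-asymptotic set whose surface area measure satisfies S_{d-1}(K,Ω_C) ≤ b < ∞, and let r := dist(o, K). Then r^{d-1} · H^{d-1}(S^{d-1} ∩ int C) ≤ b; in particular, r is bounded by a constant depending only on C and b. -/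
open scoped RealInnerProductSpace ENNReal NNReal
open MeasureTheory Metric Set

noncomputable section

variable {d : ℕ}

open scoped Pointwise

section Aux

variable {C K : Set (EuclideanSpace ℝ (Fin d))}

/-- scaling a cone by a positive factor maps it onto itself. -/
lemma cone_smul_eq (hC : IsPCCCone C) {t : ℝ} (ht : 0 < t) : t • C = C := by
  apply Subset.antisymm
  · rintro _ ⟨y, hy, rfl⟩
    exact hC.2.2.1 y hy t ht.le
  · intro y hy
    exact ⟨t⁻¹ • y, hC.2.2.1 y hy t⁻¹ (inv_nonneg.2 ht.le), by
      simp [smul_smul, mul_inv_cancel₀ ht.ne']⟩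

lemma interior_cone_smul (hC : IsPCCCone C) {t : ℝ} (ht : 0 < t) {y : EuclideanSpace ℝ (Fin d)}
    (hy : y ∈ interior C) : t • y ∈ interior C := by
  have : t • y ∈ t • interior C := smul_mem_smul_set hy
  rwa [← interior_smul₀ ht.ne' C, cone_smul_eq hC ht] at this

lemma frontier_cone_smul (hC : IsPCCCone C) {t : ℝ} (ht : 0 < t) {y : EuclideanSpace ℝ (Fin d)}
    (hy : y ∈ frontier C) : t • y ∈ frontier C := by
  rw [hC.1.frontier_eq] at hy ⊢
  refine ⟨hC.2.2.1 y hy.1 t ht.le, fun h => hy.2 ?_⟩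
  have := interior_cone_smul hC (inv_pos.2 ht) h
  rwa [smul_smul, inv_mul_cancel₀ ht.ne', one_smul] at this

/-- the interior of a pointed cone does not contain `0` (for `d ≥ 1`). -/
lemma zero_not_mem_interior (hd : 2 ≤ d) (hC : IsPCCCone C) :
    (0 : EuclideanSpace ℝ (Fin d)) ∉ interior C := by
  intro h0
  obtain ⟨ε, hε, hball⟩ := Metric.isOpen_iff.1 isOpen_interior 0 h0
  set e : EuclideanSpace ℝ (Fin d) := (ε / 2) • EuclideanSpace.single (⟨0, by omega⟩ : Fin d) (1 : ℝ)
  have hne : ‖e‖ = ε / 2 := by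
    rw [norm_smul, EuclideanSpace.norm_single]
    rw [Real.norm_of_nonneg (by positivity), norm_one, mul_one]
  have he : e ∈ C := interior_subset <| hball <| by
    rw [mem_ball, dist_zero_right] at *
    rw [hne]; linarith
  have he' : -e ∈ C := interior_subset <| hball <| by
    rw [mem_ball, dist_zero_right, norm_neg, hne]; linarith
  have := hC.2.2.2.1 e he he'
  rw [this, norm_zero] at hne
  linarith

/-- there is a direction `v` with `v ∉ C` and `-v ∉ C`. -/
lemma exists_outside_dir (hd : 2 ≤ d) (hC : IsPCCCone C) :
    ∃ v : EuclideanSpace ℝ (Fin d), v ∉ C ∧ -v ∉ C := by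
  by_contra h
  push_neg at h
  -- a nonzero interior point
  obtain ⟨z, hz⟩ := hC.2.2.2.2
  have hz0 : z ≠ 0 := fun h => (zero_not_mem_interior hd hC) (h ▸ hz)
  set x₀ : EuclideanSpace ℝ (Fin d) := -z with hx₀
  have hx₀0 : x₀ ≠ 0 := by simpa [hx₀] using hz0
  -- an orthogonal nonzero vector
  have hspan : (ℝ ∙ x₀) ≠ ⊤ := by
    intro htop
    have h1 : Module.finrank ℝ (ℝ ∙ x₀) = 1 := finrank_span_singleton hx₀0
    have h2 : Module.finrank ℝ (EuclideanSpace ℝ (Fin d)) = d := by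
      simp [finrank_euclideanSpace]
    rw [htop, finrank_top] at h1
    omega
  obtain ⟨w₀, hw₀⟩ : ∃ w₀, w₀ ∉ (ℝ ∙ x₀ : Submodule ℝ _) := by
    by_contra hw; push_neg at hw
    exact hspan (Submodule.eq_top_iff'.2 hw)
  set w : EuclideanSpace ℝ (Fin d) := w₀ - (⟪x₀, w₀⟫ / ‖x₀‖ ^ 2) • x₀ with hw_def
  have hwx : ⟪x₀, w⟫ = 0 := by
    rw [hw_def, inner_sub_right, real_inner_smul_right, real_inner_self_eq_norm_sq]
    field_simp [norm_ne_zero_iff.2 hx₀0]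
    ring
  have hw0 : w ≠ 0 := by
    intro hw0
    apply hw₀
    have : w₀ = (⟪x₀, w₀⟫ / ‖x₀‖ ^ 2) • x₀ := by
      have := sub_eq_zero.1 hw0
      linear_combination (norm := module) this
    rw [this]
    exact Submodule.smul_mem _ _ (Submodule.mem_span_singleton_self x₀)
  -- the path
  set γ : ℝ → EuclideanSpace ℝ (Fin d) := fun θ => Real.cos θ • x₀ + Real.sin θ • w with hγ
  have hcont : Continuous γ := by
    apply Continuous.add <;> fun_prop
  have hconn := isPreconnected_Icc (a := (0:ℝ)) (b := Real.pi)
  rw [isPreconnected_closed_iff] at hconn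
  obtain ⟨θ, hθIcc, hθ1, hθ2⟩ := hconn (γ ⁻¹' C) (γ ⁻¹' (Neg.neg ⁻¹' C))
    (hC.1.preimage hcont) ((hC.1.preimage continuous_neg).preimage hcont)
    (fun θ _ => by
      by_cases hc : γ θ ∈ C
      · exact Or.inl hc
      · exact Or.inr (h (γ θ) hc))
    ⟨Real.pi, ⟨by positivity, le_refl _⟩, by
      simp only [mem_preimage, hγ, Real.cos_pi, Real.sin_pi, zero_smul, add_zero, neg_one_smul]
      simpa [hx₀] using interior_subset hz⟩
    ⟨0, ⟨le_refl _, Real.pi_pos.le⟩, by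
      simp only [mem_preimage, hγ, Real.cos_zero, Real.sin_zero, zero_smul, add_zero, one_smul]
      simpa [hx₀] using interior_subset hz⟩
  have hγ0 : γ θ = 0 := hC.2.2.2.1 _ hθ1 (by simpa using hθ2)
  -- contradiction : γ θ ≠ 0
  have h1 : ⟪x₀, γ θ⟫ = Real.cos θ * ‖x₀‖ ^ 2 := by
    show ⟪x₀, Real.cos θ • x₀ + Real.sin θ • w⟫ = _
    rw [inner_add_right, real_inner_smul_right, real_inner_smul_right, hwx,
      real_inner_self_eq_norm_sq]
    ring
  have h2 : ⟪w, γ θ⟫ = Real.sin θ * ‖w‖ ^ 2 := by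
    show ⟪w, Real.cos θ • x₀ + Real.sin θ • w⟫ = _
    have hwx' : ⟪w, x₀⟫ = 0 := by rw [real_inner_comm]; exact hwx
    rw [inner_add_right, real_inner_smul_right, real_inner_smul_right,
      hwx', real_inner_self_eq_norm_sq]
    ring
  rw [hγ0, inner_zero_right] at h1 h2
  have hx2 : (0:ℝ) < ‖x₀‖ ^ 2 := pow_pos (norm_pos_iff.2 hx₀0) 2
  have hw2 : (0:ℝ) < ‖w‖ ^ 2 := pow_pos (norm_pos_iff.2 hw0) 2
  have hc0 : Real.cos θ = 0 := by
    rcases mul_eq_zero.1 h1.symm with h | h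
    · exact h
    · exact absurd h hx2.ne'
  have hs0 : Real.sin θ = 0 := by
    rcases mul_eq_zero.1 h2.symm with h | h
    · exact h
    · exact absurd h hw2.ne'
  have := Real.sin_sq_add_cos_sq θ
  rw [hc0, hs0] at this
  norm_num at this

end Aux

section Aux2

variable {C K : Set (EuclideanSpace ℝ (Fin d))}

/-- every point of `C` is a convex combination of two frontier points of `C`. -/
lemma conv_frontier (hd : 2 ≤ d) (hC : IsPCCCone C) {y : EuclideanSpace ℝ (Fin d)} (hy : y ∈ C) :
    ∃ a ∈ frontier C, ∃ b ∈ frontier C, ∃ σ : ℝ, 0 ≤ σ ∧ σ ≤ 1 ∧ y = σ • a + (1 - σ) • b := by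
  obtain ⟨v, hv, hv'⟩ := exists_outside_dir hd hC
  have hv0 : v ≠ 0 := by rintro rfl; exact hv (by simpa using hC.2.2.1 y hy 0 le_rfl)
  -- the two endpoint functions
  have main : ∀ v' : EuclideanSpace ℝ (Fin d), v' ∉ C → ∃ t : ℝ, 0 ≤ t ∧
      y + t • v' ∈ frontier C ∧ ∀ s, 0 ≤ s → y + s • v' ∈ C → s ≤ t := by
    intro v' hv'C
    set A : Set ℝ := {t | 0 ≤ t ∧ y + t • v' ∈ C} with hA
    have hA0 : (0:ℝ) ∈ A := ⟨le_refl _, by simpa using hy⟩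
    have hAclosed : IsClosed A := by
      have : A = Ici (0:ℝ) ∩ (fun t : ℝ => y + t • v') ⁻¹' C := by
        ext t; simp [hA, mem_Ici]
      rw [this]
      exact isClosed_Ici.inter (hC.1.preimage (by fun_prop))
    have hAbdd : BddAbove A := by
      by_contra hbdd
      apply hv'C
      have hseq : ∀ n : ℕ, ∃ t ∈ A, (n:ℝ) + 1 < t := by
        intro n
        rcases not_bddAbove_iff.1 hbdd ((n:ℝ)+1) with ⟨t, ht, h⟩
        exact ⟨t, ht, h⟩
      choose t ht hlt using hseq
      have htpos : ∀ n, 0 < t n := fun n => lt_of_le_of_lt (by positivity) (hlt n)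
      have hmem : ∀ n, (t n)⁻¹ • y + v' ∈ C := by
        intro n
        have := hC.2.2.1 _ (ht n).2 (t n)⁻¹ (inv_nonneg.2 (htpos n).le)
        rwa [smul_add, smul_smul, inv_mul_cancel₀ (htpos n).ne', one_smul] at this
      have hlim : Filter.Tendsto (fun n => (t n)⁻¹ • y + v') Filter.atTop (nhds v') := by
        have h1 : Filter.Tendsto (fun n => (t n)⁻¹) Filter.atTop (nhds 0) := by
          apply squeeze_zero (fun n => (inv_nonneg.2 (htpos n).le))
            (fun n => (inv_anti₀ (by positivity) (hlt n).le))
          have : Filter.Tendsto (fun n : ℕ => ((n:ℝ)+1)⁻¹) Filter.atTop (nhds 0) :=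
            tendsto_one_div_add_atTop_nhds_zero_nat.congr (by intro n; rw [one_div])
          exact this
        have : Filter.Tendsto (fun n => (t n)⁻¹ • y) Filter.atTop (nhds ((0:ℝ) • y)) :=
          h1.smul_const y
        rw [zero_smul] at this
        simpa using this.add_const v'
      exact hC.1.mem_of_tendsto hlim (Filter.Eventually.of_forall hmem)
    set t₀ := sSup A with ht₀
    have ht₀A : t₀ ∈ A := hAclosed.csSup_mem ⟨0, hA0⟩ hAbdd
    refine ⟨t₀, ht₀A.1, ?_, fun s hs hsC => le_csSup hAbdd ⟨hs, hsC⟩⟩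
    rw [hC.1.frontier_eq]
    refine ⟨ht₀A.2, fun hint => ?_⟩
    obtain ⟨ε, hε, hball⟩ := Metric.isOpen_iff.1 isOpen_interior _ hint
    have h0v : 0 < ‖v'‖ := norm_pos_iff.2 (by
      rintro rfl; exact hv'C (by simpa using hC.2.2.1 y hy 0 le_rfl))
    have hεv : 0 < ε / (2 * ‖v'‖) := by positivity
    have : y + (t₀ + ε / (2 * ‖v'‖)) • v' ∈ C := by
      apply interior_subset; apply hball
      rw [mem_ball]
      have : y + (t₀ + ε / (2 * ‖v'‖)) • v' - (y + t₀ • v') = (ε / (2 * ‖v'‖)) • v' := by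
        module
      rw [dist_eq_norm, this, norm_smul, Real.norm_of_nonneg hεv.le]
      rw [div_mul_eq_mul_div, div_lt_iff₀ (by positivity)]
      nlinarith
    have := le_csSup hAbdd (⟨by linarith [ht₀A.1], this⟩ : t₀ + ε / (2 * ‖v'‖) ∈ A)
    linarith
  obtain ⟨t₁, ht₁0, ht₁f, ht₁max⟩ := main v hv
  obtain ⟨t₂, ht₂0, ht₂f, ht₂max⟩ := main (-v) hv'
  rcases eq_or_lt_of_le (by positivity : (0:ℝ) ≤ t₁ + t₂) with hzero | hpos
  · -- t₁ = t₂ = 0 : y itself is a frontier point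
    have ht₁ : t₁ = 0 := by linarith
    refine ⟨y, ?_, y, ?_, 1, by norm_num, by norm_num, by module⟩ <;>
    · have := ht₁f; rw [ht₁] at this; simpa using this
  · refine ⟨y + t₁ • v, ht₁f, y + t₂ • (-v), ht₂f, t₂ / (t₁ + t₂),
      by positivity, by rw [div_le_one hpos]; linarith, ?_⟩
    have hs : (t₁+t₂)⁻¹ * (t₁+t₂) = 1 := inv_mul_cancel₀ hpos.ne'
    rw [div_eq_mul_inv]
    first
    | linear_combination (norm := module) hs • (t₂ • v)
    | linear_combination (norm := module) hs • ((-t₂) • v)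
    | linear_combination (norm := module) hs • (t₂ • v) + hs • y
    | linear_combination (norm := module) hs • ((-t₂) • v) + hs • y

end Aux2

section Aux3

variable {C K : Set (EuclideanSpace ℝ (Fin d))}

/-- key asymptotic estimate. -/
lemma key_asym (hC : IsPCCCone C) (hK : CAsymptotic C K) {u : EuclideanSpace ℝ (Fin d)} {c : ℝ}
    (hb : ∀ a ∈ K, ⟪u, a⟫ ≤ c) {y : EuclideanSpace ℝ (Fin d)} (hy : y ∈ frontier C)
    (hy1 : ‖y‖ = 1) {ε : ℝ} (hε : 0 < ε) (T : ℝ) :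
    ∃ t : ℝ, T ≤ t ∧ 0 < t ∧ t * ⟪u, y⟫ ≤ c + ε * ‖u‖ := by
  obtain ⟨R, hR⟩ := hK.2.2.2.2 ε hε
  set t : ℝ := max (max R T) 1 with ht_def
  have ht1 : (1:ℝ) ≤ t := le_max_right _ _
  have htpos : 0 < t := lt_of_lt_of_le one_pos ht1
  have hty : t • y ∈ frontier C := frontier_cone_smul hC htpos hy
  have hnorm : ‖t • y‖ = t := by
    rw [norm_smul, hy1, mul_one, Real.norm_of_nonneg htpos.le]
  have hinf : Metric.infDist (t • y) K < ε := by
    apply hR _ hty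
    rw [hnorm]; exact le_trans (le_max_left _ _) (le_max_left _ _)
  obtain ⟨a, haK, hdist⟩ := (Metric.infDist_lt_iff hK.1).1 hinf
  refine ⟨t, le_trans (le_max_right _ _) (le_max_left _ _), htpos, ?_⟩
  have h1 : t * ⟪u, y⟫ = ⟪u, t • y⟫ := (real_inner_smul_right u y t).symm
  have h2 : ⟪u, t • y⟫ = ⟪u, a⟫ + ⟪u, t • y - a⟫ := by
    rw [inner_sub_right]; ring
  have h3 : ⟪u, t • y - a⟫ ≤ ‖u‖ * ‖t • y - a‖ := real_inner_le_norm u _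
  have h4 : ‖t • y - a‖ ≤ ε := by
    rw [← dist_eq_norm]; exact hdist.le
  have h5 : ‖u‖ * ‖t • y - a‖ ≤ ‖u‖ * ε := by
    apply mul_le_mul_of_nonneg_left h4 (norm_nonneg u)
  have := hb a haK
  rw [h1, h2]
  nlinarith [norm_nonneg u]

/-- `K + C ⊆ K`. -/
lemma K_add_C (hd : 2 ≤ d) (hC : IsPCCCone C) (hK : CAsymptotic C K) :
    ∀ k ∈ K, ∀ y ∈ C, k + y ∈ K := by
  -- step 1 : frontier vectors
  have step1 : ∀ k ∈ K, ∀ y ∈ frontier C, k + y ∈ K := by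
    intro k hk y hy
    rcases eq_or_ne y 0 with rfl | hy0
    · simpa using hk
    by_contra hno
    obtain ⟨f, c', hfK, hfc⟩ := geometric_hahn_banach_closed_point hK.2.2.1 hK.2.1 hno
    set u : EuclideanSpace ℝ (Fin d) := (InnerProductSpace.toDual ℝ _).symm f with hu_def
    have huf : ∀ z, ⟪u, z⟫ = f z := fun z => InnerProductSpace.toDual_symm_apply
    have hub : ∀ a ∈ K, ⟪u, a⟫ ≤ c' := fun a ha => (huf a) ▸ (hfK a ha).le
    have hfy : 0 < f y := by
      have h1 := hfK k hk
      have h2 : f (k + y) = f k + f y := by rw [map_add]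
      rw [h2] at hfc; linarith
    set yh : EuclideanSpace ℝ (Fin d) := ‖y‖⁻¹ • y with hyh
    have hy0' : 0 < ‖y‖ := norm_pos_iff.2 hy0
    have hyhf : yh ∈ frontier C := frontier_cone_smul hC (inv_pos.2 hy0') hy
    have hyh1 : ‖yh‖ = 1 := by
      rw [hyh, norm_smul, Real.norm_of_nonneg (inv_nonneg.2 hy0'.le), inv_mul_cancel₀ hy0'.ne']
    have hup : 0 < ⟪u, yh⟫ := by
      rw [hyh, real_inner_smul_right, huf]
      positivity
    obtain ⟨t, hTt, htpos, hineq⟩ := key_asym hC hK hub hyhf hyh1 one_pos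
      ((c' + ‖u‖ + 1) / ⟪u, yh⟫)
    have : (c' + ‖u‖ + 1) / ⟪u, yh⟫ * ⟪u, yh⟫ ≤ t * ⟪u, yh⟫ :=
      mul_le_mul_of_nonneg_right hTt hup.le
    rw [div_mul_cancel₀ _ hup.ne'] at this
    linarith
  intro k hk y hy
  obtain ⟨a, haf, b, hbf, σ, hσ0, hσ1, hy_eq⟩ := conv_frontier hd hC hy
  have hstep : ∀ s : ℝ, 0 ≤ s → ∀ z ∈ frontier C, ∀ k' ∈ K, k' + s • z ∈ K := by
    intro s hs z hz k' hk'
    rcases eq_or_lt_of_le hs with rfl | hs'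
    · simpa using hk'
    · exact step1 k' hk' _ (frontier_cone_smul hC hs' hz)
  have h1 : k + σ • a ∈ K := hstep σ hσ0 a haf k hk
  have h2 : (k + σ • a) + (1 - σ) • b ∈ K := hstep (1 - σ) (by linarith) b hbf _ h1
  rw [hy_eq]
  rw [show k + (σ • a + (1 - σ) • b) = (k + σ • a) + (1 - σ) • b by module]
  exact h2

/-- every frontier point of `K` admits a nonzero outer normal vector. -/
lemma exists_normal (hd : 2 ≤ d) (hC : IsPCCCone C) (hK : CAsymptotic C K)
    {x : EuclideanSpace ℝ (Fin d)} (hx : x ∈ frontier K) :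
    ∃ u : EuclideanSpace ℝ (Fin d), u ≠ 0 ∧ ∀ a ∈ K, ⟪u, a⟫ ≤ ⟪u, x⟫ := by
  obtain ⟨k, hk⟩ := hK.1
  obtain ⟨z, hz⟩ := hC.2.2.2.2
  -- interior of K is nonempty
  have hsub : (fun w => k + w) '' interior C ⊆ K := by
    rintro _ ⟨w, hw, rfl⟩
    exact K_add_C hd hC hK k hk w (interior_subset hw)
  have hopen : IsOpen ((fun w => k + w) '' interior C) :=
    (Homeomorph.addLeft k).isOpenMap _ isOpen_interior
  have hz₀ : k + z ∈ interior K := interior_maximal hsub hopen ⟨z, hz, rfl⟩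
  set z₀ := k + z
  have hxi : x ∉ interior K := hx.2
  obtain ⟨f, hf⟩ := geometric_hahn_banach_open_point (hK.2.2.1.interior) isOpen_interior hxi
  have hfle : ∀ a ∈ K, f a ≤ f x := by
    intro a ha
    apply le_of_forall_pos_le_add
    intro ε hε
    set t : ℝ := min 1 (ε / (|f a - f z₀| + 1)) with ht_def
    have ht0 : 0 < t := lt_min one_pos (by positivity)
    have ht1 : t ≤ 1 := min_le_left _ _
    have hcombo : (1 - t) • a + t • z₀ ∈ interior K :=
      hK.2.2.1.combo_self_interior_mem_interior ha hz₀ (by linarith) ht0 (by ring)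
    have hval := hf _ hcombo
    have hexp : f ((1 - t) • a + t • z₀) = (1 - t) * f a + t * f z₀ := by
      rw [map_add, f.map_smul, f.map_smul]; rfl
    rw [hexp] at hval
    have habs : t * |f a - f z₀| < ε := by
      have h1 : t ≤ ε / (|f a - f z₀| + 1) := min_le_right _ _
      have h2 : t * (|f a - f z₀| + 1) ≤ ε := by
        rw [← le_div_iff₀ (by positivity)]; exact h1
      nlinarith
    have h3 : f a - f z₀ ≤ |f a - f z₀| := le_abs_self _
    nlinarith
  set u : EuclideanSpace ℝ (Fin d) := (InnerProductSpace.toDual ℝ _).symm f with hu_def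
  have huf : ∀ z, ⟪u, z⟫ = f z := fun z => InnerProductSpace.toDual_symm_apply
  refine ⟨u, ?_, fun a ha => by rw [huf, huf]; exact hfle a ha⟩
  intro hu0
  have h1 := hf z₀ hz₀
  have h2 : f z₀ = ⟪u, z₀⟫ := (huf z₀).symm
  have h3 : f x = ⟪u, x⟫ := (huf x).symm
  rw [hu0] at h2 h3
  simp only [inner_zero_left] at h2 h3
  rw [h2, h3] at h1
  exact lt_irrefl 0 h1

/-- an outer normal at an interior-of-`C` boundary point of `K`, normalized, lies in `Ω_C`. -/
lemma normal_in_omega (hd : 2 ≤ d) (hC : IsPCCCone C) (hK : CAsymptotic C K)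
    {x u : EuclideanSpace ℝ (Fin d)} (hxC : x ∈ interior C) (hu : u ≠ 0)
    (hn : ∀ a ∈ K, ⟪u, a⟫ ≤ ⟪u, x⟫) :
    (‖u‖⁻¹ • u) ∈ omegaC C ∧ ∀ a ∈ K, ⟪‖u‖⁻¹ • u, a⟫ ≤ ⟪‖u‖⁻¹ • u, x⟫ := by
  have hu0 : 0 < ‖u‖ := norm_pos_iff.2 hu
  set c := ⟪u, x⟫ with hc_def
  -- (A) weak inequality on the frontier of C
  have hA : ∀ y ∈ frontier C, ⟪u, y⟫ ≤ 0 := by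
    intro y hy
    rcases eq_or_ne y 0 with rfl | hy0
    · simp
    by_contra hpos
    push_neg at hpos
    have hy0' : 0 < ‖y‖ := norm_pos_iff.2 hy0
    set yh : EuclideanSpace ℝ (Fin d) := ‖y‖⁻¹ • y with hyh
    have hyhf : yh ∈ frontier C := frontier_cone_smul hC (inv_pos.2 hy0') hy
    have hyh1 : ‖yh‖ = 1 := by
      rw [hyh, norm_smul, Real.norm_of_nonneg (inv_nonneg.2 hy0'.le), inv_mul_cancel₀ hy0'.ne']
    have hup : 0 < ⟪u, yh⟫ := by
      rw [hyh, real_inner_smul_right]; positivity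
    obtain ⟨t, hTt, htpos, hineq⟩ := key_asym hC hK hn hyhf hyh1 one_pos
      ((c + ‖u‖ + 1) / ⟪u, yh⟫)
    have : (c + ‖u‖ + 1) / ⟪u, yh⟫ * ⟪u, yh⟫ ≤ t * ⟪u, yh⟫ :=
      mul_le_mul_of_nonneg_right hTt hup.le
    rw [div_mul_cancel₀ _ hup.ne'] at this
    linarith
  -- u is in the polar cone
  have hpol : ∀ y ∈ C, ⟪u, y⟫ ≤ 0 := by
    intro y hy
    obtain ⟨a, haf, b, hbf, σ, hσ0, hσ1, hy_eq⟩ := conv_frontier hd hC hy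
    rw [hy_eq, inner_add_right, real_inner_smul_right, real_inner_smul_right]
    nlinarith [hA a haf, hA b hbf]
  -- c < 0
  have hcneg : c < 0 := by
    obtain ⟨δ, hδ, hball⟩ := Metric.isOpen_iff.1 isOpen_interior x hxC
    set x' : EuclideanSpace ℝ (Fin d) := x + (δ / 2) • (‖u‖⁻¹ • u) with hx'
    have hx'C : x' ∈ C := by
      apply interior_subset; apply hball
      rw [mem_ball, hx']
      have : x + (δ / 2) • (‖u‖⁻¹ • u) - x = (δ / 2) • (‖u‖⁻¹ • u) := by module
      rw [dist_eq_norm, this, norm_smul, norm_smul, Real.norm_of_nonneg (by positivity),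
        Real.norm_of_nonneg (inv_nonneg.2 hu0.le), inv_mul_cancel₀ hu0.ne']
      linarith
    have := hpol x' hx'C
    rw [hx', inner_add_right, real_inner_smul_right, real_inner_smul_right,
      real_inner_self_eq_norm_sq] at this
    have hval : ‖u‖⁻¹ * ‖u‖ ^ 2 = ‖u‖ := by field_simp
    rw [hval] at this
    nlinarith
  -- (B) strict inequality on the frontier
  have hB : ∀ y ∈ frontier C, y ≠ 0 → ⟪u, y⟫ < 0 := by
    intro y hy hy0
    rcases lt_or_eq_of_le (hA y hy) with h | h
    · exact h
    exfalso
    have hy0' : 0 < ‖y‖ := norm_pos_iff.2 hy0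
    set yh : EuclideanSpace ℝ (Fin d) := ‖y‖⁻¹ • y with hyh
    have hyhf : yh ∈ frontier C := frontier_cone_smul hC (inv_pos.2 hy0') hy
    have hyh1 : ‖yh‖ = 1 := by
      rw [hyh, norm_smul, Real.norm_of_nonneg (inv_nonneg.2 hy0'.le), inv_mul_cancel₀ hy0'.ne']
    have hup : ⟪u, yh⟫ = 0 := by
      rw [hyh, real_inner_smul_right, h, mul_zero]
    have hε : 0 < -c / (2 * ‖u‖) := div_pos (by linarith) (by positivity)
    obtain ⟨t, hTt, htpos, hineq⟩ := key_asym hC hK hn hyhf hyh1 hε 0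
    rw [hup, mul_zero] at hineq
    have : -c / (2 * ‖u‖) * ‖u‖ = -c / 2 := by field_simp
    rw [this] at hineq
    linarith
  -- strict inequality on all of C ∖ {0}
  have hBC : ∀ y ∈ C, y ≠ 0 → ⟪u, y⟫ < 0 := by
    intro y hy hy0
    obtain ⟨a, haf, b, hbf, σ, hσ0, hσ1, hy_eq⟩ := conv_frontier hd hC hy
    rcases eq_or_lt_of_le hσ0 with rfl | hσpos
    · rw [hy_eq]
      simp only [zero_smul, zero_add, sub_zero, one_smul]
      apply hB b hbf
      intro hb0
      apply hy0
      rw [hy_eq, hb0]; simp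
    rcases eq_or_lt_of_le hσ1 with hσeq | hσlt
    · rw [hy_eq, hσeq]
      simp only [one_smul, sub_self, zero_smul, add_zero]
      apply hB a haf
      intro ha0
      apply hy0
      rw [hy_eq, ha0, hσeq]; simp
    -- 0 < σ < 1
    rw [hy_eq, inner_add_right, real_inner_smul_right, real_inner_smul_right]
    rcases eq_or_ne a 0 with rfl | ha0
    · have hb0 : b ≠ 0 := by
        intro hb0
        apply hy0; rw [hy_eq, hb0]; simp
      have h1 := hB b hbf hb0
      have h2 : ⟪u, (0 : EuclideanSpace ℝ (Fin d))⟫ = 0 := inner_zero_right u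
      nlinarith
    · have h1 := hB a haf ha0
      have h2 := hA b hbf
      nlinarith
  -- compactness : the maximum on C ∩ sphere is negative
  have hx0 : x ≠ 0 := fun h => zero_not_mem_interior hd hC (h ▸ hxC)
  have hxn : 0 < ‖x‖ := norm_pos_iff.2 hx0
  have hne : (C ∩ sphere (0 : EuclideanSpace ℝ (Fin d)) 1).Nonempty := by
    refine ⟨‖x‖⁻¹ • x, hC.2.2.1 x (interior_subset hxC) _ (inv_nonneg.2 hxn.le), ?_⟩
    rw [mem_sphere_iff_norm, sub_zero, norm_smul, Real.norm_of_nonneg (inv_nonneg.2 hxn.le),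
      inv_mul_cancel₀ hxn.ne']
  have hcpt : IsCompact (C ∩ sphere (0 : EuclideanSpace ℝ (Fin d)) 1) :=
    (isCompact_sphere _ _).inter_left hC.1
  have hcont : Continuous fun y : EuclideanSpace ℝ (Fin d) => ⟪u, y⟫ :=
    Continuous.inner continuous_const continuous_id
  obtain ⟨ys, hysmem, hysmax⟩ := hcpt.exists_isMaxOn hne hcont.continuousOn
  set M := ⟪u, ys⟫ with hM_def
  have hys0 : ys ≠ 0 := by
    intro h
    have := hysmem.2
    rw [h, mem_sphere_iff_norm, sub_zero, norm_zero] at this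
    norm_num at this
  have hMneg : M < 0 := hBC ys hysmem.1 hys0
  have hbound : ∀ y ∈ C, ⟪u, y⟫ ≤ M * ‖y‖ := by
    intro y hy
    rcases eq_or_ne y 0 with rfl | hy0
    · simp
    have hyn : 0 < ‖y‖ := norm_pos_iff.2 hy0
    have hyh : ‖y‖⁻¹ • y ∈ C ∩ sphere (0 : EuclideanSpace ℝ (Fin d)) 1 := by
      refine ⟨hC.2.2.1 y hy _ (inv_nonneg.2 hyn.le), ?_⟩
      rw [mem_sphere_iff_norm, sub_zero, norm_smul, Real.norm_of_nonneg (inv_nonneg.2 hyn.le),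
        inv_mul_cancel₀ hyn.ne']
    have h5 : ⟪u, ‖y‖⁻¹ • y⟫ ≤ M := hysmax hyh
    rw [real_inner_smul_right] at h5
    have h6 : ‖y‖ * (‖y‖⁻¹ * ⟪u, y⟫) ≤ ‖y‖ * M := mul_le_mul_of_nonneg_left h5 hyn.le
    have h7 : ‖y‖ * (‖y‖⁻¹ * ⟪u, y⟫) = ⟪u, y⟫ := by field_simp
    rw [mul_comm M ‖y‖]
    linarith
  -- the normalized normal
  set uh : EuclideanSpace ℝ (Fin d) := ‖u‖⁻¹ • u with huh
  have huh_inner : ∀ z, ⟪uh, z⟫ = ‖u‖⁻¹ * ⟪u, z⟫ := fun z => real_inner_smul_left _ _ _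
  have hMh : ∀ y ∈ C, ⟪uh, y⟫ ≤ (M / ‖u‖) * ‖y‖ := by
    intro y hy
    rw [huh_inner y]
    calc ‖u‖⁻¹ * ⟪u, y⟫ ≤ ‖u‖⁻¹ * (M * ‖y‖) :=
          mul_le_mul_of_nonneg_left (hbound y hy) (inv_nonneg.2 hu0.le)
      _ = (M / ‖u‖) * ‖y‖ := by field_simp
  have hMh0 : M / ‖u‖ < 0 := div_neg_of_neg_of_pos hMneg hu0
  have hpolmem : ball uh (-(M / ‖u‖)) ⊆ polarCone C := by
    intro v hv
    intro y hy
    have h1 : ⟪v, y⟫ = ⟪uh, y⟫ + ⟪v - uh, y⟫ := by rw [inner_sub_left]; ring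
    have h2 : ⟪v - uh, y⟫ ≤ ‖v - uh‖ * ‖y‖ := real_inner_le_norm _ _
    have h3 : ‖v - uh‖ < -(M / ‖u‖) := by
      rw [← dist_eq_norm]; exact mem_ball.1 hv
    have h4 := hMh y hy
    nlinarith [norm_nonneg y, norm_nonneg (v - uh)]
  have huh_sphere : uh ∈ sphere (0 : EuclideanSpace ℝ (Fin d)) 1 := by
    rw [mem_sphere_iff_norm, sub_zero, huh, norm_smul,
      Real.norm_of_nonneg (inv_nonneg.2 hu0.le), inv_mul_cancel₀ hu0.ne']
  have huh_int : uh ∈ interior (polarCone C) :=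
    mem_interior.2 ⟨ball uh (-(M / ‖u‖)), hpolmem, isOpen_ball, mem_ball_self (by linarith)⟩
  exact ⟨⟨huh_sphere, huh_int⟩, fun a ha => by
    rw [huh_inner, huh_inner]
    exact mul_le_mul_of_nonneg_left (hn a ha) (inv_nonneg.2 hu0.le)⟩

end Aux3

section Aux4

variable {C K : Set (EuclideanSpace ℝ (Fin d))}

/-- for a unit vector in the interior of `C`, the ray hits the boundary of `K` in a point of
the reverse spherical image of `Ω_C`, at distance at least `infDist 0 K`. -/
lemma ray_point (hd : 2 ≤ d) (hC : IsPCCCone C) (hK : CAsymptotic C K)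
    (hr : 0 < Metric.infDist 0 K) {u : EuclideanSpace ℝ (Fin d)} (hu1 : ‖u‖ = 1)
    (huC : u ∈ interior C) :
    ∃ ρ : ℝ, Metric.infDist 0 K ≤ ρ ∧ ρ • u ∈ revSphImage K (omegaC C) := by
  obtain ⟨k, hk⟩ := hK.1
  set T : Set ℝ := {t | 0 ≤ t ∧ t • u ∈ K} with hT
  obtain ⟨ε, hε, hball⟩ := Metric.isOpen_iff.1 isOpen_interior u huC
  set t₀ : ℝ := max ((‖k‖ + 1) / ε) 1 with ht₀
  have ht₀pos : 0 < t₀ := lt_of_lt_of_le one_pos (le_max_right _ _)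
  have hklt : ‖t₀⁻¹ • k‖ < ε := by
    rw [norm_smul, Real.norm_of_nonneg (inv_nonneg.2 ht₀pos.le)]
    have h1 : (‖k‖ + 1) / ε ≤ t₀ := le_max_left _ _
    have h2 : ‖k‖ + 1 ≤ t₀ * ε := by rw [← div_le_iff₀ hε]; exact h1
    rw [inv_mul_eq_div, div_lt_iff₀ ht₀pos]
    nlinarith
  have hw : u - t₀⁻¹ • k ∈ C := by
    apply interior_subset; apply hball
    rw [mem_ball, dist_eq_norm]
    have : u - t₀⁻¹ • k - u = -(t₀⁻¹ • k) := by module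
    rw [this, norm_neg]
    exact hklt
  have hT0 : t₀ ∈ T := by
    refine ⟨ht₀pos.le, ?_⟩
    have h1 : t₀ • u = k + t₀ • (u - t₀⁻¹ • k) := by
      rw [smul_sub, smul_smul, mul_inv_cancel₀ ht₀pos.ne', one_smul]
      module
    rw [h1]
    exact K_add_C hd hC hK k hk _ (hC.2.2.1 _ hw t₀ ht₀pos.le)
  have hTbdd : BddBelow T := ⟨0, fun s hs => hs.1⟩
  have hTclosed : IsClosed T := by
    have : T = Ici (0:ℝ) ∩ (fun t : ℝ => t • u) ⁻¹' K := by
      ext t; simp [hT, mem_Ici]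
    rw [this]
    exact isClosed_Ici.inter (hK.2.1.preimage (by fun_prop))
  set ρ := sInf T with hρ
  have hρT : ρ ∈ T := hTclosed.csInf_mem ⟨t₀, hT0⟩ hTbdd
  have hρr : Metric.infDist 0 K ≤ ρ := by
    have h1 := Metric.infDist_le_dist_of_mem hρT.2 (x := (0 : EuclideanSpace ℝ (Fin d)))
    rwa [dist_zero_left, norm_smul, hu1, mul_one, Real.norm_of_nonneg hρT.1] at h1
  have hρpos : 0 < ρ := lt_of_lt_of_le hr hρr
  have hfront : ρ • u ∈ frontier K := by
    rw [hK.2.1.frontier_eq]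
    refine ⟨hρT.2, fun hint => ?_⟩
    obtain ⟨ε', hε', hball'⟩ := Metric.isOpen_iff.1 isOpen_interior _ hint
    set s : ℝ := max 0 (ρ - ε' / 2) with hs
    have hs0 : 0 ≤ s := le_max_left _ _
    have hslt : s < ρ := max_lt hρpos (by linarith)
    have hsge : ρ - ε' / 2 ≤ s := le_max_right _ _
    have hsK : s • u ∈ K := by
      apply interior_subset; apply hball'
      rw [mem_ball, dist_eq_norm, ← sub_smul, norm_smul, hu1, mul_one]
      rw [Real.norm_of_nonpos (by linarith)]
      linarith
    have : ρ ≤ s := csInf_le hTbdd ⟨hs0, hsK⟩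
    linarith
  have hintC : ρ • u ∈ interior C := interior_cone_smul hC hρpos huC
  obtain ⟨v, hv0, hvn⟩ := exists_normal hd hC hK hfront
  obtain ⟨homega, hnorm2⟩ := normal_in_omega hd hC hK hintC hv0 hvn
  exact ⟨ρ, hρr, hfront, ‖v‖⁻¹ • v, homega, hnorm2⟩

end Aux4


/-- **Lemma 2.0, inequality (2.b).** If `K` is `C`-asymptotic with `S_{d-1}(K, Ω_C) ≤ b < ∞`
and `r = dist(o, K)`, then `r^{d-1} · H^{d-1}(S^{d-1} ∩ int C) ≤ b`. -/
theorem inradius_bound (d : ℕ) (hd : 2 ≤ d)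
    (C : Set (EuclideanSpace ℝ (Fin d))) (hC : IsPCCCone C)
    (K : Set (EuclideanSpace ℝ (Fin d))) (hK : CAsymptotic C K)
    (b : ℝ≥0∞) (hb : b < ⊤) (hS : surfMeas K (omegaC C) ≤ b) :
    ENNReal.ofReal (Metric.infDist 0 K ^ (d - 1)) *
      μH[(d : ℝ) - 1] (Metric.sphere (0 : EuclideanSpace ℝ (Fin d)) 1 ∩ interior C) ≤ b := by
  set r := Metric.infDist 0 K with hr_def
  rcases eq_or_lt_of_le (Metric.infDist_nonneg : (0:ℝ) ≤ r) with hr0 | hrpos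
  · have hr0' : r = 0 := by rw [hr_def, ← hr0]
    rw [hr0', zero_pow (Nat.sub_ne_zero_of_lt (by omega))]
    simp
  have hd1 : (0:ℝ) ≤ (d:ℝ) - 1 := by
    have : (2:ℝ) ≤ (d:ℝ) := by exact_mod_cast hd
    linarith
  set τ := revSphImage K (omegaC C) with hτ
  set f : EuclideanSpace ℝ (Fin d) → EuclideanSpace ℝ (Fin d) :=
    fun x => (r * ‖x‖⁻¹) • x with hf
  have hτsub : τ ⊆ {x : EuclideanSpace ℝ (Fin d) | r ≤ ‖x‖} := by
    intro x hx
    have hxK : x ∈ K := hK.2.1.frontier_subset hx.1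
    have h1 := Metric.infDist_le_dist_of_mem hxK (x := (0 : EuclideanSpace ℝ (Fin d)))
    rwa [dist_zero_left] at h1
  have hlip : LipschitzOnWith 1 f {x : EuclideanSpace ℝ (Fin d) | r ≤ ‖x‖} := by
    rw [lipschitzOnWith_iff_dist_le_mul]
    intro x hx y hy
    rw [NNReal.coe_one, one_mul, dist_eq_norm, dist_eq_norm]
    have hx0 : 0 < ‖x‖ := lt_of_lt_of_le hrpos hx
    have hy0 : 0 < ‖y‖ := lt_of_lt_of_le hrpos hy
    rw [← pow_le_pow_iff_left₀ (norm_nonneg _) (norm_nonneg _) (two_ne_zero)]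
    rw [norm_sub_sq_real, norm_sub_sq_real]
    have hfx : ‖f x‖ = r := by
      rw [hf, norm_smul, Real.norm_of_nonneg (by positivity)]
      field_simp
    have hfy : ‖f y‖ = r := by
      rw [hf, norm_smul, Real.norm_of_nonneg (by positivity)]
      field_simp
    have hinner : ⟪f x, f y⟫ = (r * ‖x‖⁻¹) * ((r * ‖y‖⁻¹) * ⟪x, y⟫) := by
      rw [hf, real_inner_smul_left, real_inner_smul_right]
    rw [hfx, hfy, hinner]
    have hp : ⟪x, y⟫ ≤ ‖x‖ * ‖y‖ := real_inner_le_norm x y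
    have hsx : r * ‖x‖⁻¹ ≤ 1 := by
      rw [← div_eq_mul_inv, div_le_one hx0]; exact hx
    have hsy : r * ‖y‖⁻¹ ≤ 1 := by
      rw [← div_eq_mul_inv, div_le_one hy0]; exact hy
    have hsx0 : 0 ≤ r * ‖x‖⁻¹ := by positivity
    have hsy0 : 0 ≤ r * ‖y‖⁻¹ := by positivity
    have hst : (r * ‖x‖⁻¹) * (r * ‖y‖⁻¹) ≤ 1 := mul_le_one₀ hsx hsy0 hsy
    have hkey : (r * ‖x‖⁻¹) * (r * ‖y‖⁻¹) * (‖x‖ * ‖y‖) = r * r := by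
      field_simp
    nlinarith [mul_nonneg (sub_nonneg.2 hp) (sub_nonneg.2 hst), sq_nonneg (‖x‖ - ‖y‖)]
  have himg : r • (Metric.sphere (0 : EuclideanSpace ℝ (Fin d)) 1 ∩ interior C) ⊆ f '' τ := by
    rintro - ⟨w, ⟨hw1, hw2⟩, rfl⟩
    have hwn : ‖w‖ = 1 := by rwa [mem_sphere_iff_norm, sub_zero] at hw1
    obtain ⟨ρ, hρr, hρτ⟩ := ray_point hd hC hK hrpos hwn hw2
    have hρpos : 0 < ρ := lt_of_lt_of_le hrpos hρr
    refine ⟨ρ • w, hρτ, ?_⟩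
    show (r * ‖ρ • w‖⁻¹) • (ρ • w) = r • w
    rw [norm_smul, hwn, mul_one, Real.norm_of_nonneg hρpos.le, smul_smul]
    congr 1
    field_simp
  have hms : μH[(d : ℝ) - 1] (r • (Metric.sphere (0 : EuclideanSpace ℝ (Fin d)) 1 ∩ interior C))
      = ENNReal.ofReal (r ^ (d - 1)) *
        μH[(d : ℝ) - 1] (Metric.sphere (0 : EuclideanSpace ℝ (Fin d)) 1 ∩ interior C) := by
    rw [MeasureTheory.Measure.hausdorffMeasure_smul₀ hd1 hrpos.ne' _, ENNReal.smul_def,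
      ← hr_def]
    congr 1
    rw [ENNReal.coe_rpow_of_nonneg _ hd1]
    have hcoe : (‖r‖₊ : ℝ≥0∞) = ENNReal.ofReal r := by
      rw [← ENNReal.ofReal_coe_nnreal, coe_nnnorm, Real.norm_of_nonneg hrpos.le]
    rw [hcoe]
    have hcast : ((d : ℝ) - 1) = ((d - 1 : ℕ) : ℝ) := by
      rw [Nat.cast_sub (by omega), Nat.cast_one]
    rw [hcast, ENNReal.rpow_natCast, ← ENNReal.ofReal_pow hrpos.le]
  calc ENNReal.ofReal (r ^ (d - 1)) *
        μH[(d : ℝ) - 1] (Metric.sphere (0 : EuclideanSpace ℝ (Fin d)) 1 ∩ interior C)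
      = μH[(d : ℝ) - 1] (r • (Metric.sphere (0 : EuclideanSpace ℝ (Fin d)) 1 ∩ interior C)) :=
        hms.symm
    _ ≤ μH[(d : ℝ) - 1] (f '' τ) := measure_mono himg
    _ ≤ 1 * μH[(d : ℝ) - 1] τ := by
        simpa using (hlip.mono hτsub).hausdorffMeasure_image_le hd1
    _ = surfMeas K (omegaC C) := by rw [one_mul, hτ]; rfl
    _ ≤ b := hS
end
end

section
/- Let K be a C-asymptotic set and let ω be a compact subset of Ω_C. Then the reverse spherical image τ(K,ω) is a bounded subset of ℝ^d, and consequently S_{d-1}(K,ω) < ∞. -/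
open scoped RealInnerProductSpace ENNReal NNReal
open MeasureTheory Metric Set

noncomputable section

variable {d : ℕ}

lemma aux_bounded_finite (m : ℕ) (s : Set (EuclideanSpace ℝ (Fin m)))
    (hs : Bornology.IsBounded s) : μH[(m : ℝ)] s < ⊤ := by
  obtain ⟨r, hr⟩ := hs.subset_closedBall 0
  have heq : LipschitzWith 1 (WithLp.equiv 2 (∀ _ : Fin m, ℝ)) := PiLp.lipschitzWith_ofLp 2 _
  set K : ℝ≥0 := (m : ℝ≥0) ^ (2⁻¹ : ℝ) with hK
  have hsymm : LipschitzWith K (WithLp.equiv 2 (∀ _ : Fin m, ℝ)).symm := by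
    intro a b
    simpa using (PiLp.antilipschitzWith_ofLp 2 (fun _ : Fin m => ℝ))
      ((WithLp.equiv 2 (∀ _ : Fin m, ℝ)).symm a) ((WithLp.equiv 2 (∀ _ : Fin m, ℝ)).symm b)
  have hsub : s ⊆ (WithLp.equiv 2 (∀ _ : Fin m, ℝ)).symm ''
      (Metric.closedBall (0 : ∀ _ : Fin m, ℝ) r) := by
    intro x hx
    refine ⟨WithLp.equiv 2 _ x, ?_, by simp⟩
    simp only [mem_closedBall] at *
    have h0 : dist ((WithLp.equiv 2 (∀ _ : Fin m, ℝ)) x) (0 : ∀ _ : Fin m, ℝ) ≤ dist x 0 := by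
      simpa using heq.dist_le_mul x 0
    exact h0.trans (hr hx)
  calc μH[(m : ℝ)] s ≤ μH[(m : ℝ)] ((WithLp.equiv 2 (∀ _ : Fin m, ℝ)).symm ''
        (Metric.closedBall (0 : ∀ _ : Fin m, ℝ) r)) := measure_mono hsub
    _ ≤ (K : ℝ≥0∞) ^ (m : ℝ) * μH[(m : ℝ)] (Metric.closedBall (0 : ∀ _ : Fin m, ℝ) r) :=
        hsymm.hausdorffMeasure_image_le (by positivity) _
    _ < ⊤ := by
        have h1 : μH[(m : ℝ)] (Metric.closedBall (0 : ∀ _ : Fin m, ℝ) r) =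
            volume (Metric.closedBall (0 : ∀ _ : Fin m, ℝ) r) := by
          rw [← hausdorffMeasure_pi_real (ι := Fin m)]
          norm_num
        rw [h1]
        exact ENNReal.mul_lt_top (ENNReal.rpow_lt_top_of_nonneg (by positivity)
          ENNReal.coe_ne_top) (isCompact_closedBall 0 r).measure_lt_top


lemma aux_hyperplane_finite (d : ℕ) (hd : 1 ≤ d) (e : EuclideanSpace ℝ (Fin d))
    (he : ‖e‖ = 1) (b r : ℝ) :
    μH[(d : ℝ) - 1] {z : EuclideanSpace ℝ (Fin d) | ⟪e, z⟫ = b ∧ ‖z‖ ≤ r} < ⊤ := by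
  obtain ⟨m, rfl⟩ : ∃ m, d = m + 1 := ⟨d - 1, by omega⟩
  have hexp : ((m + 1 : ℕ) : ℝ) - 1 = (m : ℝ) := by push_cast; ring
  rw [hexp]
  haveI : Fact (Module.finrank ℝ (EuclideanSpace ℝ (Fin (m + 1))) = m + 1) :=
    ⟨finrank_euclideanSpace_fin⟩
  have he0 : e ≠ 0 := by intro h; rw [h] at he; simp at he
  set W := (ℝ ∙ e)ᗮ with hW
  let ob : OrthonormalBasis (Fin m) ℝ W :=
    OrthonormalBasis.fromOrthogonalSpanSingleton m he0
  let Φ : EuclideanSpace ℝ (Fin m) → EuclideanSpace ℝ (Fin (m + 1)) :=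
    fun y => b • e + ((ob.repr.symm y : W) : EuclideanSpace ℝ (Fin (m + 1)))
  have hΦ : Isometry Φ := by
    apply Isometry.of_dist_eq
    intro y y'
    have : Φ y - Φ y' = ((ob.repr.symm y - ob.repr.symm y' : W) :
        EuclideanSpace ℝ (Fin (m + 1))) := by
      simp [Φ]
    rw [dist_eq_norm, this, Submodule.norm_coe, ← map_sub, ob.repr.symm.norm_map, dist_eq_norm]
  have hsub : {z : EuclideanSpace ℝ (Fin (m + 1)) | ⟪e, z⟫ = b ∧ ‖z‖ ≤ r} ⊆
      Φ '' (Metric.closedBall 0 (r + |b|)) := by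
    rintro z ⟨hz1, hz2⟩
    have hwmem : z - b • e ∈ W := by
      rw [hW, Submodule.mem_orthogonal_singleton_iff_inner_right]
      rw [inner_sub_right, real_inner_smul_right, real_inner_self_eq_norm_sq, he, hz1]
      ring
    refine ⟨ob.repr ⟨z - b • e, hwmem⟩, ?_, ?_⟩
    · rw [mem_closedBall, dist_zero_right, ob.repr.norm_map]
      have : ‖(⟨z - b • e, hwmem⟩ : W)‖ = ‖z - b • e‖ := rfl
      rw [this]
      calc ‖z - b • e‖ ≤ ‖z‖ + ‖b • e‖ := norm_sub_le _ _
        _ ≤ r + |b| := by rw [norm_smul, he]; simp [Real.norm_eq_abs]; exact hz2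
    · simp only [Φ, LinearIsometryEquiv.symm_apply_apply]
      simp
  calc μH[(m : ℝ)] {z : EuclideanSpace ℝ (Fin (m + 1)) | ⟪e, z⟫ = b ∧ ‖z‖ ≤ r}
      ≤ μH[(m : ℝ)] (Φ '' (Metric.closedBall 0 (r + |b|))) := measure_mono hsub
    _ = μH[(m : ℝ)] (Metric.closedBall (0 : EuclideanSpace ℝ (Fin m)) (r + |b|)) :=
        hΦ.hausdorffMeasure_image (Or.inl (by positivity)) _
    _ < ⊤ := aux_bounded_finite m _ isBounded_closedBall


lemma aux_proj_exists (K : Set (EuclideanSpace ℝ (Fin d))) (hne : K.Nonempty)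
    (hcl : IsClosed K) (hconv : Convex ℝ K) (z : EuclideanSpace ℝ (Fin d)) :
    ∃ p ∈ K, ∀ y ∈ K, ⟪z - p, y - p⟫ ≤ 0 := by
  obtain ⟨v, hvK, hv⟩ := exists_norm_eq_iInf_of_complete_convex hne hcl.isComplete hconv z
  exact ⟨v, hvK, (norm_eq_iInf_iff_real_inner_le_zero hconv hvK).mp hv⟩

lemma aux_two_points {z w p q : EuclideanSpace ℝ (Fin d)}
    (h1 : ⟪z - p, q - p⟫ ≤ 0) (h2 : ⟪w - q, p - q⟫ ≤ 0) : ‖p - q‖ ≤ ‖z - w‖ := by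
  have key : ‖p - q‖ ^ 2 ≤ ⟪z - w, p - q⟫ := by
    have e1 : ⟪z - p, p - q⟫ ≥ 0 := by
      have : ⟪z - p, q - p⟫ = -⟪z - p, p - q⟫ := by
        rw [← inner_neg_right]; congr 1; abel
      linarith [h1, this ▸ h1]
    have e2 : ⟪w - q, p - q⟫ ≤ 0 := h2
    have e3 : ⟪(z - p) - (w - q), p - q⟫ ≥ 0 := by
      rw [inner_sub_left]; linarith
    have e4 : (z - p) - (w - q) = (z - w) - (p - q) := by abel
    rw [e4, inner_sub_left, real_inner_self_eq_norm_sq] at e3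
    linarith
  have h5 : ⟪z - w, p - q⟫ ≤ ‖z - w‖ * ‖p - q‖ := real_inner_le_norm _ _
  rcases eq_or_lt_of_le (norm_nonneg (p - q)) with h | h
  · rw [← h]; exact norm_nonneg _
  · nlinarith


/-- The reverse spherical image of a `C`-asymptotic set at a compact subset of `Ω_C` is bounded;
consequently the surface area measure of a compact set is finite. -/
theorem revSphImage_bounded_and_surfMeas_finite (d : ℕ) (hd : 2 ≤ d)
    (C : Set (EuclideanSpace ℝ (Fin d))) (hC : IsPCCCone C)
    (K : Set (EuclideanSpace ℝ (Fin d))) (hK : CAsymptotic C K)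
    (ω : Set (EuclideanSpace ℝ (Fin d))) (hωcpt : IsCompact ω) (hωsub : ω ⊆ omegaC C) :
    Bornology.IsBounded (revSphImage K ω) ∧ surfMeas K ω < ⊤ := by
  obtain ⟨hCcl, hCconv, hCcone, hCpt, hCint⟩ := hC
  obtain ⟨hKne, hKcl, hKconv, hKC, -⟩ := hK
  have hdR : (2 : ℝ) ≤ (d : ℝ) := by exact_mod_cast hd
  have hexp0 : (0 : ℝ) ≤ (d : ℝ) - 1 := by linarith
  rcases ω.eq_empty_or_nonempty with rfl | hωne
  · have hempty : revSphImage K (∅ : Set (EuclideanSpace ℝ (Fin d))) = ∅ := by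
      ext x; simp [revSphImage]
    refine ⟨by simp [hempty], by simp [surfMeas, hempty]⟩
  -- a unit vector in C
  obtain ⟨p, hp⟩ := hCint
  have hpC : p ∈ C := interior_subset hp
  have hp0 : p ≠ 0 := by
    rintro rfl
    obtain ⟨δ, hδ, hball⟩ := Metric.mem_nhds_iff.mp (mem_interior_iff_mem_nhds.mp hp)
    set i : Fin d := ⟨0, by omega⟩
    set v : EuclideanSpace ℝ (Fin d) := EuclideanSpace.single i (δ / 2) with hv
    have hvn : ‖v‖ = δ / 2 := by
      rw [hv, EuclideanSpace.norm_single, Real.norm_eq_abs, abs_of_pos (by linarith)]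
    have hvC : v ∈ C := hball (by rw [mem_ball_zero_iff, hvn]; linarith)
    have hvC' : -v ∈ C := hball (by rw [mem_ball_zero_iff, norm_neg, hvn]; linarith)
    have := hCpt v hvC hvC'
    rw [this, norm_zero] at hvn; linarith
  set q : EuclideanSpace ℝ (Fin d) := ‖p‖⁻¹ • p with hq
  have hqC : q ∈ C := hCcone p hpC _ (inv_nonneg.mpr (norm_nonneg p))
  have hqn : ‖q‖ = 1 := by
    rw [hq, norm_smul, norm_inv, norm_norm, inv_mul_cancel₀ (norm_ne_zero_iff.mpr hp0)]
  -- compact maximum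
  have hCS : IsCompact (C ∩ sphere 0 1) := (isCompact_sphere 0 1).inter_left hCcl
  have hCSne : (C ∩ sphere 0 1).Nonempty := ⟨q, hqC, by simp [mem_sphere_zero_iff_norm, hqn]⟩
  have hinner : Continuous fun pr : EuclideanSpace ℝ (Fin d) × EuclideanSpace ℝ (Fin d) =>
      (⟪pr.1, pr.2⟫ : ℝ) := continuous_inner
  obtain ⟨⟨u₀, q₀⟩, hmem, hmax⟩ := (hωcpt.prod hCS).exists_isMaxOn (hωne.prod hCSne)
    hinner.continuousOn
  set M : ℝ := ⟪u₀, q₀⟫ with hM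
  obtain ⟨hu₀ω, hq₀C, hq₀s⟩ : u₀ ∈ ω ∧ q₀ ∈ C ∧ q₀ ∈ sphere 0 1 :=
    ⟨hmem.1, hmem.2.1, hmem.2.2⟩
  have hq₀n : ‖q₀‖ = 1 := mem_sphere_zero_iff_norm.mp hq₀s
  have hu₀ : u₀ ∈ interior (polarCone C) := (hωsub hu₀ω).2
  obtain ⟨ε, hε, hball⟩ := Metric.mem_nhds_iff.mp (mem_interior_iff_mem_nhds.mp hu₀)
  have hmem2 : u₀ + (ε / 2) • q₀ ∈ polarCone C := by
    apply hball
    rw [mem_ball_iff_norm, add_sub_cancel_left, norm_smul, hq₀n, Real.norm_eq_abs,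
      abs_of_pos (by linarith)]
    linarith
  have hMneg : M ≤ -(ε / 2) := by
    have h := hmem2 q₀ hq₀C
    rw [inner_add_left, real_inner_smul_left, real_inner_self_eq_norm_sq, hq₀n] at h
    rw [hM]; nlinarith
  set c : ℝ := -M with hc
  have hc0 : 0 < c := by rw [hc]; linarith
  have hkey : ∀ u ∈ ω, ∀ y ∈ C, ⟪u, y⟫ ≤ -c * ‖y‖ := by
    intro u hu y hy
    rcases eq_or_ne y 0 with rfl | hy0
    · simp
    · have hy' : 0 < ‖y‖ := norm_pos_iff.mpr hy0
      have hyq : ‖y‖⁻¹ • y ∈ C ∩ sphere 0 1 :=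
        ⟨hCcone y hy _ (inv_nonneg.mpr (norm_nonneg y)), by
          rw [mem_sphere_zero_iff_norm, norm_smul, norm_inv, norm_norm,
            inv_mul_cancel₀ (ne_of_gt hy')]⟩
      have h : (⟪u, ‖y‖⁻¹ • y⟫ : ℝ) ≤ M := hmax (Set.mk_mem_prod hu hyq)
      rw [real_inner_smul_right] at h
      have : ⟪u, y⟫ = ‖y‖ * (‖y‖⁻¹ * ⟪u, y⟫) := by field_simp
      rw [this, hc]
      calc ‖y‖ * (‖y‖⁻¹ * ⟪u, y⟫) ≤ ‖y‖ * M := by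
            exact mul_le_mul_of_nonneg_left h (le_of_lt hy')
        _ = - -M * ‖y‖ := by ring
  have hωn : ∀ u ∈ ω, ‖u‖ = 1 := fun u hu => mem_sphere_zero_iff_norm.mp (hωsub hu).1
  obtain ⟨y₀, hy₀⟩ := hKne
  set R : ℝ := ‖y₀‖ / c with hR
  have hR0 : 0 ≤ R := by positivity
  have hbound : revSphImage K ω ⊆ closedBall 0 R := by
    rintro x ⟨hxf, u, hu, hmaxK⟩
    have hxK : x ∈ K := by
      have := frontier_subset_closure hxf; rwa [hKcl.closure_eq] at this
    have h1 : ⟪u, y₀⟫ ≤ ⟪u, x⟫ := hmaxK y₀ hy₀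
    have h2 : ⟪u, x⟫ ≤ -c * ‖x‖ := hkey u hu x (hKC hxK)
    have h3 : -‖y₀‖ ≤ ⟪u, y₀⟫ := by
      have h := abs_real_inner_le_norm u y₀
      rw [hωn u hu, one_mul] at h
      linarith [(abs_le.mp h).1]
    rw [mem_closedBall, dist_zero_right, hR, le_div_iff₀ hc0]
    nlinarith
  refine ⟨isBounded_closedBall.subset hbound, ?_⟩
  -- finiteness
  set e : EuclideanSpace ℝ (Fin d) := -q with he
  have hen : ‖e‖ = 1 := by rw [he, norm_neg, hqn]
  have heu : ∀ u ∈ ω, c ≤ ⟪e, u⟫ := by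
    intro u hu
    have h := hkey u hu q hqC
    rw [hqn, mul_one] at h
    have h2 : ⟪e, u⟫ = -⟪u, q⟫ := by rw [he, inner_neg_left, real_inner_comm]
    linarith
  set b : ℝ := R + 1 with hb
  set r : ℝ := R + (b + R) / c with hr
  choose f hfK hfmin using fun z => aux_proj_exists K ⟨y₀, hy₀⟩ hKcl hKconv z
  have hLip : LipschitzWith 1 f := by
    apply LipschitzWith.of_dist_le_mul
    intro z w
    rw [NNReal.coe_one, one_mul, dist_eq_norm, dist_eq_norm]
    exact aux_two_points (hfmin z (f w) (hfK w)) (hfmin w (f z) (hfK z))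
  have hcover : revSphImage K ω ⊆ f '' {z | ⟪e, z⟫ = b ∧ ‖z‖ ≤ r} := by
    rintro x ⟨hxf, u, hu, hmaxK⟩
    have hxK : x ∈ K := by
      have := frontier_subset_closure hxf; rwa [hKcl.closure_eq] at this
    have hxR : ‖x‖ ≤ R := by
      have := hbound ⟨hxf, u, hu, hmaxK⟩
      rwa [mem_closedBall, dist_zero_right] at this
    have hcu : c ≤ ⟪e, u⟫ := heu u hu
    have hcu0 : 0 < ⟪e, u⟫ := lt_of_lt_of_le hc0 hcu
    have hex : |⟪e, x⟫| ≤ R := by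
      have h := abs_real_inner_le_norm e x
      rw [hen, one_mul] at h
      linarith
    set t : ℝ := (b - ⟪e, x⟫) / ⟪e, u⟫ with ht
    have ht0 : 0 ≤ t := by
      apply div_nonneg _ (le_of_lt hcu0)
      have := (abs_le.mp hex).2; rw [hb]; linarith
    set z := x + t • u with hz
    have hze : ⟪e, z⟫ = b := by
      have hcan : t * ⟪e, u⟫ = b - ⟪e, x⟫ := div_mul_cancel₀ _ (ne_of_gt hcu0)
      rw [hz, inner_add_right, real_inner_smul_right, hcan]
      ring
    have htle : t ≤ (b + R) / c := by
      rw [ht]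
      apply div_le_div₀ (by linarith [(abs_le.mp hex).1] : (0:ℝ) ≤ b + R)
        (by linarith [(abs_le.mp hex).1]) hc0 hcu
    have hzr : ‖z‖ ≤ r := by
      calc ‖z‖ ≤ ‖x‖ + ‖t • u‖ := norm_add_le _ _
        _ = ‖x‖ + t := by rw [norm_smul, hωn u hu, mul_one, Real.norm_eq_abs, abs_of_nonneg ht0]
        _ ≤ R + (b + R) / c := by linarith
        _ = r := hr.symm
    refine ⟨z, ⟨hze, hzr⟩, ?_⟩
    have hnear : ∀ y ∈ K, ⟪z - x, y - x⟫ ≤ 0 := by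
      intro y hy
      have hzx : z - x = t • u := by rw [hz]; abel
      rw [hzx, real_inner_smul_left, inner_sub_right]
      have := hmaxK y hy
      nlinarith
    have h1 : ⟪z - f z, x - f z⟫ ≤ 0 := hfmin z x hxK
    have h2 : ⟪z - x, f z - x⟫ ≤ 0 := hnear (f z) (hfK z)
    have h3 := aux_two_points h1 h2
    rw [sub_self, norm_zero] at h3
    have h4 : f z - x = 0 := by
      rw [← norm_le_zero_iff]; exact h3
    rw [← sub_eq_zero]; exact h4
  rw [surfMeas]
  calc μH[(d : ℝ) - 1] (revSphImage K ω)
      ≤ μH[(d : ℝ) - 1] (f '' {z | ⟪e, z⟫ = b ∧ ‖z‖ ≤ r}) := measure_mono hcover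
    _ ≤ (1 : ℝ≥0) ^ ((d : ℝ) - 1) * μH[(d : ℝ) - 1] {z | ⟪e, z⟫ = b ∧ ‖z‖ ≤ r} :=
        hLip.hausdorffMeasure_image_le hexp0 _
    _ < ⊤ := by
        simp only [ENNReal.coe_one, ENNReal.one_rpow, one_mul]
        exact aux_hyperplane_finite d (by omega) e hen b r
end
end

section
/- Let d = 3 and let C ⊂ ℝ³ be the positive orthant, i.e., the set of vectors with all coordinates nonnegative. Then there exists a C-close set K (namely the closed convex hull of the points p_n = (1/n², 0, n−1), q_n = (0, 1/n², n−1) for n ∈ ℕ together with the rays {(x,0,0) : x ≥ 1} and {(0,x,0) : x ≥ 1}) such that S_2(K, Ω_C) < ∞ but C \ K is unbounded. In particular, a C-close set with finite total surface area measure need not be C-full. -/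
open scoped RealInnerProductSpace ENNReal NNReal
open MeasureTheory Metric Set

noncomputable section

variable {d : ℕ}

abbrev E3 := EuclideanSpace ℝ (Fin 3)

def vpt (x y z : ℝ) : E3 := (WithLp.equiv 2 (Fin 3 → ℝ)).symm ![x, y, z]

@[simp] lemma vpt_apply0 (x y z : ℝ) : vpt x y z 0 = x := rfl
@[simp] lemma vpt_apply1 (x y z : ℝ) : vpt x y z 1 = y := rfl
@[simp] lemma vpt_apply2 (x y z : ℝ) : vpt x y z 2 = z := rfl

@[simp] lemma comb_apply (a b : ℝ) (v w : E3) (i : Fin 3) :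
    (a • v + b • w) i = a * v i + b * w i := rfl

def aa (n : ℕ) : ℝ := 1 / (n : ℝ) ^ 2

lemma aa_pos {n : ℕ} (hn : 1 ≤ n) : 0 < aa n := by
  have : (0:ℝ) < (n:ℝ) := by exact_mod_cast hn
  unfold aa; positivity

lemma aa_nonneg (n : ℕ) : 0 ≤ aa n := by
  unfold aa; positivity

lemma aa_one : aa 1 = 1 := by norm_num [aa]

lemma aa_succ_lt {n : ℕ} (hn : 1 ≤ n) : aa (n+1) < aa n := by
  have h1 : (1:ℝ) ≤ (n:ℝ) := by exact_mod_cast hn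
  rw [aa, aa]
  push_cast
  rw [div_lt_div_iff₀ (by positivity) (by positivity)]
  nlinarith

def dd (n : ℕ) : ℝ := aa n - aa (n + 1)

lemma dd_pos {n : ℕ} (hn : 1 ≤ n) : 0 < dd n := sub_pos.2 (aa_succ_lt hn)

lemma dd_step {n : ℕ} (hn : 1 ≤ n) : dd (n+1) ≤ dd n := by
  have h1 : (1:ℝ) ≤ (n:ℝ) := by exact_mod_cast hn
  have h0 : (0:ℝ) < (n:ℝ) := by linarith
  rw [dd, dd, aa, aa, aa]
  push_cast
  rw [div_sub_div _ _ (by positivity) (by positivity : ((n:ℝ)+1+1)^2 ≠ 0),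
    div_sub_div _ _ (by positivity) (by positivity : ((n:ℝ)+1)^2 ≠ 0),
    div_le_div_iff₀ (by positivity) (by positivity)]
  nlinarith [sq_nonneg ((n:ℝ)), sq_nonneg ((n:ℝ)+1), sq_nonneg ((n:ℝ)+2)]

lemma dd_anti {n m : ℕ} (hn : 1 ≤ n) (hnm : n ≤ m) : dd m ≤ dd n := by
  induction m, hnm using Nat.le_induction with
  | base => exact le_refl _
  | succ m hm ih => exact le_trans (dd_step (le_trans hn hm)) ih

lemma chain {N : ℕ} (hN : 1 ≤ N) :
    ∀ m : ℕ, 1 ≤ m → aa N + dd N * ((N:ℝ) - 1) ≤ aa m + dd N * ((m:ℝ) - 1) := by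
  have up : ∀ k, N ≤ k → aa N + dd N * ((N:ℝ) - 1) ≤ aa k + dd N * ((k:ℝ) - 1) := by
    intro k hk
    induction k, hk using Nat.le_induction with
    | base => exact le_refl _
    | succ k hk ih =>
        have h1 : dd k ≤ dd N := dd_anti hN hk
        have h2 : aa k - aa (k+1) = dd k := rfl
        push_cast
        push_cast at ih
        nlinarith
  have down : ∀ j m : ℕ, 1 ≤ m → m + j = N →
      aa N + dd N * ((N:ℝ) - 1) ≤ aa m + dd N * ((m:ℝ) - 1) := by
    intro j
    induction j with
    | zero => intro m hm hmN; subst hmN; simp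
    | succ j ih =>
        intro m hm hmN
        have hmN' : (m+1) + j = N := by omega
        have hm1 : m ≤ N := by omega
        have ihm := ih (m+1) (by omega) hmN'
        have h1 : dd N ≤ dd m := dd_anti hm hm1
        have h2 : aa m - aa (m+1) = dd m := rfl
        push_cast at ihm ⊢
        nlinarith
  intro m hm
  rcases le_total m N with h | h
  · exact down (N - m) m hm (by omega)
  · exact up m h

def Aex : Set E3 :=
  {p | ∃ n : ℕ, 1 ≤ n ∧
      (p = vpt (1 / (n : ℝ) ^ 2) 0 ((n : ℝ) - 1) ∨
       p = vpt 0 (1 / (n : ℝ) ^ 2) ((n : ℝ) - 1))} ∪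
  {p | ∃ t : ℝ, 1 ≤ t ∧ (p = vpt t 0 0 ∨ p = vpt 0 t 0)}

lemma memA_P {n : ℕ} (hn : 1 ≤ n) : vpt (aa n) 0 ((n:ℝ)-1) ∈ Aex :=
  Or.inl ⟨n, hn, Or.inl rfl⟩
lemma memA_Q {n : ℕ} (hn : 1 ≤ n) : vpt 0 (aa n) ((n:ℝ)-1) ∈ Aex :=
  Or.inl ⟨n, hn, Or.inr rfl⟩
lemma memA_Rx {t : ℝ} (ht : 1 ≤ t) : vpt t 0 0 ∈ Aex :=
  Or.inr ⟨t, ht, Or.inl rfl⟩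
lemma memA_Ry {t : ℝ} (ht : 1 ≤ t) : vpt 0 t 0 ∈ Aex :=
  Or.inr ⟨t, ht, Or.inr rfl⟩

def Cor : Set E3 := {x | ∀ i, 0 ≤ x i}
def Kex : Set E3 := closure (convexHull ℝ Aex)

lemma cont_apply (i : Fin 3) : Continuous fun v : E3 => v i :=
  (continuous_apply i).comp (PiLp.continuous_ofLp 2 (fun _ : Fin 3 => ℝ))
lemma mem_hull_x {n : ℕ} (hn : 1 ≤ n) {z s : ℝ} (hz1 : (n:ℝ) - 1 ≤ z) (hz2 : z ≤ n)
    (hs : ((n:ℝ) - z) * aa n + (z - (n:ℝ) + 1) * aa (n+1) ≤ s) :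
    vpt s 0 z ∈ convexHull ℝ Aex := by
  have hK := convex_convexHull ℝ Aex
  obtain ⟨ℓ, hℓ⟩ : ∃ l : ℝ, l = ((n:ℝ) - z) * aa n + (z - (n:ℝ) + 1) * aa (n+1) := ⟨_, rfl⟩
  rw [← hℓ] at hs
  have hℓ0 : 0 ≤ ℓ := by
    rw [hℓ]
    have := aa_nonneg n; have := aa_nonneg (n+1)
    have h1 : 0 ≤ (n:ℝ) - z := by linarith
    have h2 : 0 ≤ z - (n:ℝ) + 1 := by linarith
    positivity
  have hs0 : 0 ≤ s := le_trans hℓ0 hs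
  have hP1 : vpt ℓ 0 z ∈ convexHull ℝ Aex := by
    have e1 : vpt ℓ 0 z = ((n:ℝ) - z) • vpt (aa n) 0 ((n:ℝ)-1)
        + (z - (n:ℝ) + 1) • vpt (aa (n+1)) 0 ((((n:ℕ)+1:ℕ):ℝ)-1) := by
      ext i; fin_cases i <;> simp [hℓ] <;> push_cast <;> ring
    rw [e1]
    refine hK (subset_convexHull ℝ _ (memA_P hn))
      (subset_convexHull ℝ _ (memA_P (n := n+1) (by omega)))
      (by linarith) (by linarith) (by ring)
  obtain ⟨lam, hlam⟩ : ∃ l : ℝ, l = z / ((n:ℝ) + 1) := ⟨_, rfl⟩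
  have hn1 : (1:ℝ) ≤ (n:ℝ) := by exact_mod_cast hn
  have hnpos : (0:ℝ) < (n:ℝ) + 1 := by positivity
  have hz0 : 0 ≤ z := by linarith
  have hlam0 : 0 ≤ lam := by rw [hlam]; exact div_nonneg hz0 hnpos.le
  have hlam1 : lam < 1 := by rw [hlam, div_lt_one hnpos]; linarith
  have hlamz : lam * ((n:ℝ) + 1) = z := by rw [hlam]; field_simp
  obtain ⟨T, hT⟩ : ∃ t : ℝ, t = 1 + (s + 1) / (1 - lam) := ⟨_, rfl⟩
  have hT1 : 1 ≤ T := by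
    have : 0 ≤ (s + 1) / (1 - lam) := div_nonneg (by linarith) (by linarith)
    rw [hT]; linarith
  obtain ⟨x2, hx2⟩ : ∃ x : ℝ, x = lam * aa (n+2) + (1 - lam) * T := ⟨_, rfl⟩
  have hx2s : s < x2 := by
    have hne : (1:ℝ) - lam ≠ 0 := by linarith
    have h1 : (1 - lam) * T = (1 - lam) + (s + 1) := by
      rw [hT]; field_simp
    have h2 := mul_nonneg hlam0 (aa_nonneg (n+2))
    rw [hx2, h1]; linarith
  have hx2l : ℓ < x2 := lt_of_le_of_lt hs hx2s
  have hP2 : vpt x2 0 z ∈ convexHull ℝ Aex := by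
    have e2 : vpt x2 0 z = lam • vpt (aa (n+2)) 0 ((((n:ℕ)+2:ℕ):ℝ)-1)
        + (1 - lam) • vpt T 0 0 := by
      ext i; fin_cases i
      · simpa using hx2
      · simp
      · simp; push_cast; linarith [hlamz]
    rw [e2]
    exact hK (subset_convexHull ℝ _ (memA_P (n := n+2) (by omega)))
      (subset_convexHull ℝ _ (memA_Rx hT1)) hlam0 (by linarith) (by ring)
  obtain ⟨θ, hθ⟩ : ∃ t : ℝ, t = (x2 - s) / (x2 - ℓ) := ⟨_, rfl⟩
  have hden : 0 < x2 - ℓ := by linarith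
  have hθ0 : 0 ≤ θ := by rw [hθ]; exact div_nonneg (by linarith) hden.le
  have hθ1 : θ ≤ 1 := by rw [hθ, div_le_one hden]; linarith
  have hcoord : θ * ℓ + (1 - θ) * x2 = s := by
    rw [hθ]; field_simp; ring
  have e3 : vpt s 0 z = θ • vpt ℓ 0 z + (1 - θ) • vpt x2 0 z := by
    ext i; fin_cases i <;> simp <;> linarith
  rw [e3]
  exact hK hP1 hP2 hθ0 (by linarith) (by ring)

lemma mem_hull_y {n : ℕ} (hn : 1 ≤ n) {z s : ℝ} (hz1 : (n:ℝ) - 1 ≤ z) (hz2 : z ≤ n)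
    (hs : ((n:ℝ) - z) * aa n + (z - (n:ℝ) + 1) * aa (n+1) ≤ s) :
    vpt 0 s z ∈ convexHull ℝ Aex := by
  have hK := convex_convexHull ℝ Aex
  obtain ⟨ℓ, hℓ⟩ : ∃ l : ℝ, l = ((n:ℝ) - z) * aa n + (z - (n:ℝ) + 1) * aa (n+1) := ⟨_, rfl⟩
  rw [← hℓ] at hs
  have hℓ0 : 0 ≤ ℓ := by
    rw [hℓ]
    have := aa_nonneg n; have := aa_nonneg (n+1)
    have h1 : 0 ≤ (n:ℝ) - z := by linarith
    have h2 : 0 ≤ z - (n:ℝ) + 1 := by linarith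
    positivity
  have hs0 : 0 ≤ s := le_trans hℓ0 hs
  have hP1 : vpt 0 ℓ z ∈ convexHull ℝ Aex := by
    have e1 : vpt 0 ℓ z = ((n:ℝ) - z) • vpt 0 (aa n) ((n:ℝ)-1)
        + (z - (n:ℝ) + 1) • vpt 0 (aa (n+1)) ((((n:ℕ)+1:ℕ):ℝ)-1) := by
      ext i; fin_cases i <;> simp [hℓ] <;> push_cast <;> ring
    rw [e1]
    refine hK (subset_convexHull ℝ _ (memA_Q hn))
      (subset_convexHull ℝ _ (memA_Q (n := n+1) (by omega)))
      (by linarith) (by linarith) (by ring)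
  obtain ⟨lam, hlam⟩ : ∃ l : ℝ, l = z / ((n:ℝ) + 1) := ⟨_, rfl⟩
  have hn1 : (1:ℝ) ≤ (n:ℝ) := by exact_mod_cast hn
  have hnpos : (0:ℝ) < (n:ℝ) + 1 := by positivity
  have hz0 : 0 ≤ z := by linarith
  have hlam0 : 0 ≤ lam := by rw [hlam]; exact div_nonneg hz0 hnpos.le
  have hlam1 : lam < 1 := by rw [hlam, div_lt_one hnpos]; linarith
  have hlamz : lam * ((n:ℝ) + 1) = z := by rw [hlam]; field_simp
  obtain ⟨T, hT⟩ : ∃ t : ℝ, t = 1 + (s + 1) / (1 - lam) := ⟨_, rfl⟩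
  have hT1 : 1 ≤ T := by
    have : 0 ≤ (s + 1) / (1 - lam) := div_nonneg (by linarith) (by linarith)
    rw [hT]; linarith
  obtain ⟨x2, hx2⟩ : ∃ x : ℝ, x = lam * aa (n+2) + (1 - lam) * T := ⟨_, rfl⟩
  have hx2s : s < x2 := by
    have hne : (1:ℝ) - lam ≠ 0 := by linarith
    have h1 : (1 - lam) * T = (1 - lam) + (s + 1) := by
      rw [hT]; field_simp
    have h2 := mul_nonneg hlam0 (aa_nonneg (n+2))
    rw [hx2, h1]; linarith
  have hx2l : ℓ < x2 := lt_of_le_of_lt hs hx2s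
  have hP2 : vpt 0 x2 z ∈ convexHull ℝ Aex := by
    have e2 : vpt 0 x2 z = lam • vpt 0 (aa (n+2)) ((((n:ℕ)+2:ℕ):ℝ)-1)
        + (1 - lam) • vpt 0 T 0 := by
      ext i; fin_cases i
      · simp
      · simpa using hx2
      · simp; push_cast; linarith [hlamz]
    rw [e2]
    exact hK (subset_convexHull ℝ _ (memA_Q (n := n+2) (by omega)))
      (subset_convexHull ℝ _ (memA_Ry hT1)) hlam0 (by linarith) (by ring)
  obtain ⟨θ, hθ⟩ : ∃ t : ℝ, t = (x2 - s) / (x2 - ℓ) := ⟨_, rfl⟩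
  have hden : 0 < x2 - ℓ := by linarith
  have hθ0 : 0 ≤ θ := by rw [hθ]; exact div_nonneg (by linarith) hden.le
  have hθ1 : θ ≤ 1 := by rw [hθ, div_le_one hden]; linarith
  have hcoord : θ * ℓ + (1 - θ) * x2 = s := by
    rw [hθ]; field_simp; ring
  have e3 : vpt 0 s z = θ • vpt 0 ℓ z + (1 - θ) • vpt 0 x2 z := by
    ext i; fin_cases i <;> simp <;> linarith
  rw [e3]
  exact hK hP1 hP2 hθ0 (by linarith) (by ring)
lemma mem_K_of {n : ℕ} (hn : 1 ≤ n) (v : E3) (h0 : 0 ≤ v 0) (h1 : 0 ≤ v 1)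
    (hz1 : (n:ℝ) - 1 ≤ v 2) (hz2 : v 2 ≤ n)
    (hsum : ((n:ℝ) - v 2) * aa n + (v 2 - (n:ℝ) + 1) * aa (n+1) ≤ v 0 + v 1) :
    v ∈ Kex := by
  have hK := convex_convexHull ℝ Aex
  have hℓpos : 0 < ((n:ℝ) - v 2) * aa n + (v 2 - (n:ℝ) + 1) * aa (n+1) := by
    have h2 := aa_pos (n := n+1) (by omega)
    nlinarith [aa_pos hn, aa_succ_lt hn]
  have hspos : 0 < v 0 + v 1 := lt_of_lt_of_le hℓpos hsum
  have e : v = (v 0 / (v 0 + v 1)) • vpt (v 0 + v 1) 0 (v 2)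
      + (v 1 / (v 0 + v 1)) • vpt 0 (v 0 + v 1) (v 2) := by
    ext i; fin_cases i <;> simp <;> field_simp <;> ring
  have hx := mem_hull_x hn hz1 hz2 hsum
  have hy := mem_hull_y hn hz1 hz2 hsum
  rw [e]
  exact subset_closure (hK hx hy (div_nonneg h0 hspos.le) (div_nonneg h1 hspos.le)
    (by field_simp))

def Hset (n : ℕ) : Set E3 := {v | aa n + dd n * ((n:ℝ) - 1) ≤ v 0 + v 1 + dd n * v 2}

lemma K_subset_H {n : ℕ} (hn : 1 ≤ n) : Kex ⊆ Hset n := by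
  have hcl : IsClosed (Hset n) :=
    isClosed_le continuous_const
      (((cont_apply 0).add (cont_apply 1)).add (continuous_const.mul (cont_apply 2)))
  have hcv : Convex ℝ (Hset n) := by
    intro x hx y hy a b ha hb hab
    simp only [Hset, mem_setOf_eq] at hx hy ⊢
    simp only [comb_apply]
    have k1 := mul_le_mul_of_nonneg_left hx ha
    have k2 := mul_le_mul_of_nonneg_left hy hb
    have hc : a * (aa n + dd n * ((n:ℝ) - 1)) + b * (aa n + dd n * ((n:ℝ) - 1))
        = aa n + dd n * ((n:ℝ) - 1) := by rw [← add_mul, hab, one_mul]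
    nlinarith [k1, k2, hc]
  have hA : Aex ⊆ Hset n := by
    rintro p (⟨m, hm, h | h⟩ | ⟨t, ht, h | h⟩) <;> subst h <;>
      simp only [Hset, mem_setOf_eq, vpt_apply0, vpt_apply1, vpt_apply2]
    · have haam : aa m = 1 / (m:ℝ)^2 := rfl
      linarith [chain hn m hm]
    · have haam : aa m = 1 / (m:ℝ)^2 := rfl
      linarith [chain hn m hm]
    · have := chain hn 1 le_rfl
      rw [aa_one] at this
      push_cast at this
      linarith
    · have := chain hn 1 le_rfl
      rw [aa_one] at this
      push_cast at this
      linarith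
  exact closure_minimal (convexHull_min hA hcv) hcl

lemma vpt_mem_Cor {x y z : ℝ} (hx : 0 ≤ x) (hy : 0 ≤ y) (hz : 0 ≤ z) :
    vpt x y z ∈ Cor := by
  intro i; fin_cases i <;> simpa

lemma Cor_closed : IsClosed Cor := by
  have : Cor = ⋂ i, {v : E3 | 0 ≤ v i} := by ext v; simp [Cor]
  rw [this]
  exact isClosed_iInter fun i => isClosed_le continuous_const (cont_apply i)

lemma Cor_convex : Convex ℝ Cor := by
  intro x hx y hy a b ha hb hab i
  simp only [comb_apply]
  have := hx i; have := hy i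
  positivity

lemma K_subset_C : Kex ⊆ Cor := by
  have hA : Aex ⊆ Cor := by
    rintro p (⟨m, hm, h | h⟩ | ⟨t, ht, h | h⟩) <;> subst h
    · have hm1 : (1:ℝ) ≤ (m:ℝ) := by exact_mod_cast hm
      exact vpt_mem_Cor (by positivity) le_rfl (by linarith)
    · have hm1 : (1:ℝ) ≤ (m:ℝ) := by exact_mod_cast hm
      exact vpt_mem_Cor le_rfl (by positivity) (by linarith)
    · exact vpt_mem_Cor (by linarith) le_rfl le_rfl
    · exact vpt_mem_Cor le_rfl (by linarith) le_rfl
  exact closure_minimal (convexHull_min hA Cor_convex) Cor_closed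

lemma omega_neg {u : E3} (hu : u ∈ omegaC Cor) (i : Fin 3) : u i < 0 := by
  obtain ⟨-, hu2⟩ := hu
  obtain ⟨ε, hε, hball⟩ := Metric.mem_nhds_iff.1 (mem_interior_iff_mem_nhds.1 hu2)
  have hsing : EuclideanSpace.single i (1:ℝ) ∈ Cor := by
    intro j
    rw [EuclideanSpace.single_apply]
    split <;> norm_num
  have hmem : u + (ε/2) • EuclideanSpace.single i (1:ℝ) ∈ polarCone Cor := by
    apply hball
    simp only [Metric.mem_ball, dist_eq_norm, add_sub_cancel_left, norm_smul]
    rw [EuclideanSpace.norm_single]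
    rw [Real.norm_eq_abs, Real.norm_eq_abs, abs_of_pos (by linarith : (0:ℝ) < ε/2)]
    norm_num
    linarith
  have hin := hmem _ hsing
  rw [inner_add_left, real_inner_smul_left] at hin
  have h1 : ⟪u, EuclideanSpace.single i (1:ℝ)⟫ = u i := by
    simpa using EuclideanSpace.inner_single_right (𝕜 := ℝ) i 1 u
  have h2 : ⟪EuclideanSpace.single i (1:ℝ), EuclideanSpace.single i (1:ℝ)⟫ = (1:ℝ) := by
    have := EuclideanSpace.inner_single_right (𝕜 := ℝ) i 1
      (EuclideanSpace.single i (1:ℝ))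
    simpa [EuclideanSpace.single_apply] using this
  rw [h1, h2] at hin
  linarith
lemma inner3 (u v : E3) : ⟪u, v⟫ = u 0 * v 0 + u 1 * v 1 + u 2 * v 2 := by
  simp [PiLp.inner_apply, RCLike.inner_apply, conj_trivial, Fin.sum_univ_three]; ring

def Tset (n : ℕ) : Set E3 :=
  (MeasurableEquiv.toLp 2 (Fin 3 → ℝ)).symm ⁻¹'
    (Set.pi univ ![Icc (0:ℝ) (aa n), Icc (0:ℝ) (aa n), Icc ((n:ℝ)-1) n])

lemma mem_Tset {v : E3} {n : ℕ} (h0 : 0 ≤ v 0) (h0' : v 0 ≤ aa n)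
    (h1 : 0 ≤ v 1) (h1' : v 1 ≤ aa n) (h2 : (n:ℝ)-1 ≤ v 2) (h2' : v 2 ≤ n) :
    v ∈ Tset n := by
  intro i _
  fin_cases i
  · exact ⟨h0, h0'⟩
  · exact ⟨h1, h1'⟩
  · exact ⟨h2, h2'⟩

lemma volume_Tset (n : ℕ) : volume (Tset n) ≤ ENNReal.ofReal (aa n * aa n) := by
  have hmeas : MeasurableSet
      (Set.pi univ ![Icc (0:ℝ) (aa n), Icc (0:ℝ) (aa n), Icc ((n:ℝ)-1) n]) :=
    MeasurableSet.univ_pi fun i => by fin_cases i <;> exact measurableSet_Icc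
  have h := (EuclideanSpace.volume_preserving_symm_measurableEquiv_toLp (Fin 3)).measure_preimage
    hmeas.nullMeasurableSet
  rw [Tset, h, volume_pi_pi, Fin.prod_univ_three]
  simp only [Matrix.cons_val_zero, Matrix.cons_val_one, Matrix.head_cons,
    show (![Icc (0:ℝ) (aa n), Icc (0:ℝ) (aa n), Icc ((n:ℝ)-1) n] 2 : Set ℝ)
      = Icc ((n:ℝ)-1) n from rfl, Real.volume_Icc, sub_zero,
    show (n:ℝ) - ((n:ℝ)-1) = 1 by ring, ENNReal.ofReal_one, mul_one]
  rw [← ENNReal.ofReal_mul (aa_nonneg n)]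

lemma cover_T : Cor \ Kex ⊆ ⋃ n, Tset n := by
  intro v ⟨hvC, hvK⟩
  have h0 : 0 ≤ v 0 := hvC 0
  have h1 : 0 ≤ v 1 := hvC 1
  have h2 : 0 ≤ v 2 := hvC 2
  obtain ⟨n, hn, hz1, hz2⟩ : ∃ n : ℕ, 1 ≤ n ∧ (n:ℝ) - 1 ≤ v 2 ∧ v 2 ≤ n := by
    refine ⟨⌊v 2⌋₊ + 1, by omega, ?_, ?_⟩
    · push_cast
      have := Nat.floor_le h2
      linarith
    · push_cast
      have := Nat.lt_floor_add_one (v 2)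
      linarith
  have hellle : ((n:ℝ) - v 2) * aa n + (v 2 - (n:ℝ) + 1) * aa (n+1) ≤ aa n := by
    have hle := le_of_lt (aa_succ_lt hn)
    nlinarith [aa_nonneg (n+1)]
  have hkey : ∀ w : E3, w ∈ Cor → (n:ℝ) - 1 ≤ w 2 → w 2 ≤ n → aa n < w 0 + w 1 →
      w ∈ Kex := by
    intro w hwC hw1 hw2 hgt
    exact mem_K_of hn w (hwC 0) (hwC 1) hw1 hw2 (by
      have : ((n:ℝ) - w 2) * aa n + (w 2 - (n:ℝ) + 1) * aa (n+1) ≤ aa n := by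
        have hle := le_of_lt (aa_succ_lt hn)
        nlinarith [aa_nonneg (n+1)]
      linarith)
  have hv0 : v 0 ≤ aa n := by
    by_contra hgt
    exact hvK (hkey v hvC hz1 hz2 (by push_neg at hgt; linarith))
  have hv1 : v 1 ≤ aa n := by
    by_contra hgt
    exact hvK (hkey v hvC hz1 hz2 (by push_neg at hgt; linarith))
  exact mem_iUnion.2 ⟨n, mem_Tset h0 hv0 h1 hv1 hz1 hz2⟩

lemma volume_finite : volume (Cor \ Kex) < ⊤ := by
  have h1 : volume (Cor \ Kex) ≤ ∑' n, ENNReal.ofReal (aa n * aa n) :=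
    le_trans (measure_mono cover_T)
      (le_trans (measure_iUnion_le _) (ENNReal.tsum_le_tsum fun n => volume_Tset n))
  have hsummable : Summable (fun n : ℕ => aa n * aa n) := by
    have : (fun n : ℕ => aa n * aa n) = fun n : ℕ => 1 / (n:ℝ)^4 := by
      funext n; rw [aa]; ring
    rw [this]
    exact Real.summable_one_div_nat_pow.mpr (by norm_num)
  have h2 : ∑' n, ENNReal.ofReal (aa n * aa n)
      = ENNReal.ofReal (∑' n, aa n * aa n) :=
    (ENNReal.ofReal_tsum_of_nonneg (fun n => mul_nonneg (aa_nonneg n) (aa_nonneg n))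
      hsummable).symm
  calc volume (Cor \ Kex) ≤ ∑' n, ENNReal.ofReal (aa n * aa n) := h1
    _ = ENNReal.ofReal (∑' n, aa n * aa n) := h2
    _ < ⊤ := ENNReal.ofReal_lt_top

lemma unbounded_CdiffK : ¬ Bornology.IsBounded (Cor \ Kex) := by
  intro hb
  obtain ⟨R, hR⟩ := isBounded_iff_forall_norm_le.1 hb
  obtain ⟨z, hz0, hzR⟩ : ∃ z : ℝ, 0 ≤ z ∧ R < z := ⟨max R 0 + 1, by positivity, by
    have := le_max_left R 0; linarith⟩
  obtain ⟨n, hn, hz1, hz2⟩ : ∃ n : ℕ, 1 ≤ n ∧ (n:ℝ) - 1 ≤ z ∧ z ≤ n := by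
    refine ⟨⌊z⌋₊ + 1, by omega, ?_, ?_⟩
    · push_cast; have := Nat.floor_le hz0; linarith
    · push_cast; have := Nat.lt_floor_add_one z; linarith
  have hw : vpt 0 0 z ∈ Cor \ Kex := by
    refine ⟨vpt_mem_Cor le_rfl le_rfl hz0, fun hK => ?_⟩
    have hH := K_subset_H hn hK
    simp only [Hset, mem_setOf_eq, vpt_apply0, vpt_apply1, vpt_apply2] at hH
    have hd := dd_pos hn
    have ha := aa_pos (n := n+1) (by omega)
    have hdd : dd n = aa n - aa (n+1) := rfl
    nlinarith
  have hnorm : z ≤ ‖vpt 0 0 z‖ := by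
    have h := real_inner_le_norm (vpt 0 0 z) (EuclideanSpace.single 2 (1:ℝ))
    rw [EuclideanSpace.norm_single] at h
    have h1 : ⟪vpt 0 0 z, EuclideanSpace.single 2 (1:ℝ)⟫ = z := by
      simpa using EuclideanSpace.inner_single_right (𝕜 := ℝ) 2 1 (vpt 0 0 z)
    rw [h1] at h
    simpa using h
  have := hR _ hw
  linarith
def evec : E3 := vpt (-(1/2)) (1/2) 0
def fvec (n : ℕ) : E3 := vpt ((aa (n+1) - aa n)/2) 0 (1/2)

lemma aa_le_one {n : ℕ} (hn : 1 ≤ n) : aa n ≤ 1 := by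
  have h1 : (1:ℝ) ≤ (n:ℝ) := by exact_mod_cast hn
  rw [aa, div_le_one (by positivity)]
  nlinarith

lemma aa_le_one' (n : ℕ) : aa n ≤ 1 := by
  rcases Nat.eq_zero_or_pos n with h | h
  · subst h; norm_num [aa]
  · exact aa_le_one h

lemma norm_evec : ‖evec‖ ≤ 1 := by
  rw [EuclideanSpace.norm_eq]
  rw [Real.sqrt_le_one]
  rw [Fin.sum_univ_three]
  simp only [evec, vpt_apply0, vpt_apply1, vpt_apply2, Real.norm_eq_abs]
  rw [abs_of_nonpos (by norm_num : -(1/2:ℝ) ≤ 0)]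
  norm_num

lemma norm_fvec (n : ℕ) : ‖fvec n‖ ≤ 1 := by
  rw [EuclideanSpace.norm_eq, Real.sqrt_le_one, Fin.sum_univ_three]
  simp only [fvec, vpt_apply0, vpt_apply1, vpt_apply2, Real.norm_eq_abs]
  have h1 := aa_le_one' n
  have h2 := aa_le_one' (n+1)
  have h3 := aa_nonneg n
  have h4 := aa_nonneg (n+1)
  have habs : |(aa (n+1) - aa n)/2| ≤ 1/2 := by
    rw [abs_le]; constructor <;> nlinarith
  have : |(aa (n+1) - aa n)/2| ^ 2 ≤ (1/2) ^ 2 := by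
    have := abs_nonneg ((aa (n+1) - aa n)/2)
    nlinarith
  have h5 : |(0:ℝ)| = 0 := abs_zero
  rw [h5]
  have h6 : |(1/2:ℝ)| = 1/2 := by norm_num
  rw [h6]
  nlinarith

def gmap (n : ℕ) (w : Fin 2 → ℝ) : E3 :=
  vpt (aa n) 0 ((n:ℝ)-1) + w 0 • evec + w 1 • fvec n

lemma gmap_lip (n : ℕ) : LipschitzWith 2 (gmap n) := by
  apply LipschitzWith.of_dist_le_mul
  intro w w'
  have e : gmap n w - gmap n w' = (w 0 - w' 0) • evec + (w 1 - w' 1) • fvec n := by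
    simp only [gmap, sub_smul]
    abel
  rw [dist_eq_norm, e]
  have h1 : ‖(w 0 - w' 0) • evec + (w 1 - w' 1) • fvec n‖
      ≤ |w 0 - w' 0| * ‖evec‖ + |w 1 - w' 1| * ‖fvec n‖ := by
    refine le_trans (norm_add_le _ _) ?_
    rw [norm_smul, norm_smul, Real.norm_eq_abs, Real.norm_eq_abs]
  have h2 : |w 0 - w' 0| ≤ dist w w' := by
    rw [← Real.dist_eq]; exact dist_le_pi_dist w w' 0
  have h3 : |w 1 - w' 1| ≤ dist w w' := by
    rw [← Real.dist_eq]; exact dist_le_pi_dist w w' 1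
  have h4 := norm_evec
  have h5 := norm_fvec n
  have hd : (0:ℝ) ≤ dist w w' := dist_nonneg
  have := abs_nonneg (w 0 - w' 0)
  have := abs_nonneg (w 1 - w' 1)
  push_cast
  nlinarith

def Dset (n : ℕ) : Set (Fin 2 → ℝ) := Set.pi univ ![Icc 0 (2 * aa n), Icc (0:ℝ) 2]

lemma rev_subset : revSphImage Kex (omegaC Cor) ⊆ ⋃ n, gmap n '' Dset n := by
  rintro x ⟨hxf, u, huΩ, hmax⟩
  have hxK : x ∈ Kex := isClosed_closure.frontier_subset hxf
  have hxC := K_subset_C hxK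
  have h0 : 0 ≤ x 0 := hxC 0
  have h1 : 0 ≤ x 1 := hxC 1
  have h2 : 0 ≤ x 2 := hxC 2
  have hu0 : u 0 < 0 := omega_neg huΩ 0
  have hu1 : u 1 < 0 := omega_neg huΩ 1
  obtain ⟨n, hn, hz1, hz2⟩ : ∃ n : ℕ, 1 ≤ n ∧ (n:ℝ) - 1 ≤ x 2 ∧ x 2 ≤ n := by
    refine ⟨⌊x 2⌋₊ + 1, by omega, ?_, ?_⟩
    · push_cast; have := Nat.floor_le h2; linarith
    · push_cast; have := Nat.lt_floor_add_one (x 2); linarith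
  obtain ⟨ℓ, hℓ⟩ : ∃ l : ℝ,
      l = ((n:ℝ) - x 2) * aa n + (x 2 - (n:ℝ) + 1) * aa (n+1) := ⟨_, rfl⟩
  have hℓpos : 0 < ℓ := by
    rw [hℓ]
    nlinarith [aa_pos hn, aa_pos (n := n+1) (by omega : 1 ≤ n+1), aa_succ_lt hn]
  have hℓle : ℓ ≤ aa n := by
    rw [hℓ]
    nlinarith [aa_nonneg (n+1), le_of_lt (aa_succ_lt hn)]
  -- lower bound from the halfspace
  have hge : ℓ ≤ x 0 + x 1 := by
    have hH := K_subset_H hn hxK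
    simp only [Hset, mem_setOf_eq] at hH
    have hdd : dd n = aa n - aa (n+1) := rfl
    rw [hℓ]; nlinarith
  -- upper bound from maximality
  have hle : x 0 + x 1 ≤ ℓ := by
    by_contra hgt
    push_neg at hgt
    obtain ⟨s, hsdef⟩ : ∃ s : ℝ, s = x 0 + x 1 := ⟨_, rfl⟩
    rw [← hsdef] at hgt
    have hspos : 0 < s := lt_trans hℓpos hgt
    obtain ⟨r, hr⟩ : ∃ r : ℝ, r = ℓ / s := ⟨_, rfl⟩
    have hr0 : 0 ≤ r := by rw [hr]; positivity
    have hr1 : r < 1 := by rw [hr, div_lt_one hspos]; exact hgt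
    have hy : vpt (x 0 * r) (x 1 * r) (x 2) ∈ Kex := by
      have e : vpt (x 0 * r) (x 1 * r) (x 2)
          = (x 0 / s) • vpt ℓ 0 (x 2) + (x 1 / s) • vpt 0 ℓ (x 2) := by
        ext i; fin_cases i
        · simp; rw [hr]; ring
        · simp; rw [hr]; ring
        · have hne : x 0 + x 1 ≠ 0 := by rw [hsdef] at hspos; exact hspos.ne'
          simp
          field_simp
          rw [hsdef]
      rw [e]
      exact subset_closure ((convex_convexHull ℝ Aex)
        (mem_hull_x hn hz1 hz2 (le_of_eq hℓ.symm))
        (mem_hull_y hn hz1 hz2 (le_of_eq hℓ.symm))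
        (by positivity) (by positivity)
        (by
          have hne : x 0 + x 1 ≠ 0 := by rw [hsdef] at hspos; exact hspos.ne'
          field_simp
          linarith [hsdef]))
    have hcmp := hmax _ hy
    rw [inner3, inner3] at hcmp
    simp only [vpt_apply0, vpt_apply1, vpt_apply2] at hcmp
    -- hcmp : u0*(x0*r) + u1*(x1*r) + u2*x2 ≤ u0*x0 + u1*x1 + u2*x2
    have hneg : u 0 * x 0 + u 1 * x 1 < 0 := by
      rcases lt_or_ge 0 (x 0) with hx0 | hx0
      · nlinarith
      · have hx0' : x 0 = 0 := le_antisymm hx0 h0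
        have hx1 : 0 < x 1 := by rw [hsdef, hx0'] at hspos; linarith
        nlinarith
    nlinarith
  have hsum : x 0 + x 1 = ℓ := le_antisymm hle hge
  refine mem_iUnion.2 ⟨n, ![2 * x 1, 2 * (x 2 - (n:ℝ) + 1)], ?_, ?_⟩
  · intro i _
    fin_cases i
    · show 2 * x 1 ∈ Icc 0 (2 * aa n)
      exact Set.mem_Icc.mpr ⟨by linarith, by linarith⟩
    · show 2 * (x 2 - (n:ℝ) + 1) ∈ Icc (0:ℝ) 2
      exact Set.mem_Icc.mpr ⟨by linarith, by linarith⟩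
  · ext i
    rw [hℓ] at hsum
    fin_cases i
    · show _ = x 0
      simp only [gmap, evec, fvec]
      show aa n + 2 * x 1 * (-(1/2)) + 2 * (x 2 - (n:ℝ) + 1) * ((aa (n+1) - aa n)/2) = x 0
      linear_combination -hsum
    · show _ = x 1
      show (0:ℝ) + 2 * x 1 * (1/2) + 2 * (x 2 - (n:ℝ) + 1) * 0 = x 1
      ring
    · show _ = x 2
      show ((n:ℝ)-1) + 2 * x 1 * 0 + 2 * (x 2 - (n:ℝ) + 1) * (1/2) = x 2
      ring
lemma hm2_Dset (n : ℕ) : μH[(2:ℝ)] (Dset n) = ENNReal.ofReal (2 * aa n) * ENNReal.ofReal 2 := by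
  have h1 : μH[(2:ℝ)] (Dset n) = volume (Dset n) := by
    rw [show ((2:ℝ)) = ((Fintype.card (Fin 2) : ℕ) : ℝ) by simp]
    rw [hausdorffMeasure_pi_real]
  rw [h1, Dset, volume_pi_pi, Fin.prod_univ_two]
  simp only [Matrix.cons_val_zero, Matrix.cons_val_one, Matrix.head_cons]
  rw [Real.volume_Icc, Real.volume_Icc, sub_zero, sub_zero]

lemma hm2_image (n : ℕ) :
    μH[(2:ℝ)] (gmap n '' Dset n) ≤ ENNReal.ofReal (16 * aa n) := by
  have h := (gmap_lip n).hausdorffMeasure_image_le (by norm_num : (0:ℝ) ≤ 2) (Dset n)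
  rw [hm2_Dset n] at h
  refine le_trans h (le_of_eq ?_)
  have h2 : ((2:ℝ≥0) : ℝ≥0∞) ^ (2:ℝ) = 4 := by
    rw [show (2:ℝ) = ((2:ℕ):ℝ) by norm_num, ENNReal.rpow_natCast]
    norm_num
  rw [h2]
  rw [← ENNReal.ofReal_mul (by linarith [aa_nonneg n])]
  rw [show (4:ℝ≥0∞) = ENNReal.ofReal 4 by norm_num]
  rw [← ENNReal.ofReal_mul (by norm_num)]
  ring_nf

lemma surf_lt_top : surfMeas Kex (omegaC Cor) < ⊤ := by
  have hd : ((3:ℕ):ℝ) - 1 = (2:ℝ) := by norm_num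
  rw [surfMeas, hd]
  have hsummable : Summable (fun n : ℕ => 16 * aa n) := by
    have h : Summable (fun n : ℕ => aa n) := by
      simpa [aa] using Real.summable_one_div_nat_pow.mpr (by norm_num : 1 < 2)
    exact h.mul_left 16
  calc μH[(2:ℝ)] (revSphImage Kex (omegaC Cor))
      ≤ μH[(2:ℝ)] (⋃ n, gmap n '' Dset n) := measure_mono rev_subset
    _ ≤ ∑' n, μH[(2:ℝ)] (gmap n '' Dset n) := measure_iUnion_le _
    _ ≤ ∑' n, ENNReal.ofReal (16 * aa n) := ENNReal.tsum_le_tsum fun n => hm2_image n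
    _ = ENNReal.ofReal (∑' n, 16 * aa n) :=
        (ENNReal.ofReal_tsum_of_nonneg (fun n => by linarith [aa_nonneg n]) hsummable).symm
    _ < ⊤ := ENNReal.ofReal_lt_top

lemma cclose : CClose Cor Kex :=
  ⟨⟨vpt 1 0 0, subset_closure (subset_convexHull ℝ _ (memA_Rx le_rfl))⟩,
    isClosed_closure, (convex_convexHull ℝ Aex).closure, K_subset_C, volume_finite⟩

/-- **Example (Section 4).** In `ℝ³` with `C` the positive orthant, the closed convex hull `K`
of the points `p_n = (1/n², 0, n-1)`, `q_n = (0, 1/n², n-1)` (`n ≥ 1`) and the rays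
`{(x,0,0) : x ≥ 1}`, `{(0,x,0) : x ≥ 1}` is a `C`-close set with finite total surface area
measure for which `C \ K` is unbounded; in particular `K` is not `C`-full. -/
theorem Cclose_finite_measure_not_Cfull :
    ∀ C : Set (EuclideanSpace ℝ (Fin 3)), C = {x | ∀ i, 0 ≤ x i} →
    ∀ A : Set (EuclideanSpace ℝ (Fin 3)),
      A = {p | ∃ n : ℕ, 1 ≤ n ∧
              (p = (WithLp.equiv 2 (Fin 3 → ℝ)).symm ![1 / (n : ℝ) ^ 2, 0, (n : ℝ) - 1] ∨
               p = (WithLp.equiv 2 (Fin 3 → ℝ)).symm ![0, 1 / (n : ℝ) ^ 2, (n : ℝ) - 1])} ∪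
          {p | ∃ t : ℝ, 1 ≤ t ∧
              (p = (WithLp.equiv 2 (Fin 3 → ℝ)).symm ![t, 0, 0] ∨
               p = (WithLp.equiv 2 (Fin 3 → ℝ)).symm ![0, t, 0])} →
    ∀ K : Set (EuclideanSpace ℝ (Fin 3)), K = closure (convexHull ℝ A) →
      CClose C K ∧ surfMeas K (omegaC C) < ⊤ ∧
        ¬ Bornology.IsBounded (C \ K) ∧ ¬ CFull C K := by
  intro C hC A hA K hK
  subst hC hA hK
  exact ⟨cclose, surf_lt_top, unbounded_CdiffK, fun h => unbounded_CdiffK h.2.2.2.2⟩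
end
end
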